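/- arXiv:2512.07046 — 6 statements merged into one kernel-verified Lean document; each statement's English description precedes it below -/
import Mathlib

section
/- Let T>0, B ∈ ℝ^{n×m}, and Σ_init, Σ_fin ∈ S₊ⁿ. Define Σ_t := (1 − t/T)Σ_init + (t/T)Σ_fin for t ∈ [0,T] and A_t := ½(Σ̇_t − BBᵀ)Σ_t^{−1}, where Σ̇_t = (Σ_fin − Σ_init)/T. Then Σ_t is symmetric positive definite for every t ∈ [0,T], both A and Σ are continuously differentiable on [0,T], and the pair satisfies Σ̇_t = A_tΣ_t + Σ_tA_tᵀ + BBᵀ for all t ∈ [0,T] as well as Σ_0 = Σ_init and Σ_T = Σ_fin. Consequently, for every α ∈ [0,1], J_α(A,Σ) is finite. -/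
open MeasureTheory Matrix Set

/-- The linear interpolation `Σ_t = (1 − t/T)Σ_init + (t/T)Σ_fin`. -/
noncomputable def interpS {n : ℕ} (T : ℝ) (Si Sf : Matrix (Fin n) (Fin n) ℝ) :
    ℝ → Matrix (Fin n) (Fin n) ℝ :=
  fun t => (1 - t / T) • Si + (t / T) • Sf

/-- The constant derivative `Σ̇_t = (Σ_fin − Σ_init)/T` of the linear interpolation. -/
noncomputable def interpSd {n : ℕ} (T : ℝ) (Si Sf : Matrix (Fin n) (Fin n) ℝ) :
    Matrix (Fin n) (Fin n) ℝ :=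
  (1 / T) • (Sf - Si)

/-- The control `A_t = ½(Σ̇_t − BBᵀ)Σ_t⁻¹` inducing the linear interpolation. -/
noncomputable def interpA {n m : ℕ} (T : ℝ) (B : Matrix (Fin n) (Fin m) ℝ)
    (Si Sf : Matrix (Fin n) (Fin n) ℝ) : ℝ → Matrix (Fin n) (Fin n) ℝ :=
  fun t => (1 / 2 : ℝ) • ((interpSd T Si Sf - B * Bᵀ) * (interpS T Si Sf t)⁻¹)

/-- The time derivative `Ȧ_t = −½(Σ̇ − BBᵀ)Σ_t⁻¹Σ̇Σ_t⁻¹` of the control. -/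
noncomputable def interpAd {n m : ℕ} (T : ℝ) (B : Matrix (Fin n) (Fin m) ℝ)
    (Si Sf : Matrix (Fin n) (Fin n) ℝ) : ℝ → Matrix (Fin n) (Fin n) ℝ :=
  fun t => (-(1 / 2) : ℝ) •
    ((interpSd T Si Sf - B * Bᵀ) * (interpS T Si Sf t)⁻¹ * interpSd T Si Sf *
      (interpS T Si Sf t)⁻¹)

section Aux

attribute [local instance] Matrix.linftyOpNormedAddCommGroup Matrix.linftyOpNormedRing
  Matrix.linftyOpNormedAlgebra

variable {n : ℕ}

/-- Entry evaluation as a continuous linear map. -/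
noncomputable def entryCLM (i j : Fin n) : Matrix (Fin n) (Fin n) ℝ →L[ℝ] ℝ :=
  LinearMap.toContinuousLinearMap (Matrix.entryLinearMap ℝ ℝ i j)

@[simp] lemma entryCLM_apply (i j : Fin n) (M : Matrix (Fin n) (Fin n) ℝ) :
    entryCLM i j M = M i j := rfl

/-- Trace as a continuous linear map. -/
noncomputable def traceCLM : Matrix (Fin n) (Fin n) ℝ →L[ℝ] ℝ :=
  LinearMap.toContinuousLinearMap (Matrix.traceLinearMap (Fin n) ℝ ℝ)

@[simp] lemma traceCLM_apply (M : Matrix (Fin n) (Fin n) ℝ) :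
    traceCLM M = M.trace := rfl

/-- Transpose as a continuous linear map. -/
noncomputable def transCLM : Matrix (Fin n) (Fin n) ℝ →L[ℝ] Matrix (Fin n) (Fin n) ℝ :=
  LinearMap.toContinuousLinearMap
    (Matrix.transposeLinearEquiv (Fin n) (Fin n) ℝ ℝ).toLinearMap

@[simp] lemma transCLM_apply (M : Matrix (Fin n) (Fin n) ℝ) :
    transCLM M = Mᵀ := rfl

lemma posSemidef_smul {A : Matrix (Fin n) (Fin n) ℝ} (hA : A.PosSemidef) {c : ℝ}
    (hc : 0 ≤ c) : (c • A).PosSemidef := by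
  refine ⟨?_, fun x => ?_⟩
  · unfold Matrix.IsHermitian
    rw [Matrix.conjTranspose_smul, hA.1]
    simp
  · have h : (x.sum fun i xi => x.sum fun j xj => star xi * (c • A) i j * xj) =
        c * (x.sum fun i xi => x.sum fun j xj => star xi * A i j * xj) := by
      simp only [Finsupp.sum, Finset.mul_sum, Matrix.smul_apply, smul_eq_mul]
      exact Finset.sum_congr rfl fun i _ => Finset.sum_congr rfl fun j _ => by ring
    rw [h]
    exact mul_nonneg hc (hA.2 x)

lemma posDef_smul {A : Matrix (Fin n) (Fin n) ℝ} (hA : A.PosDef) {c : ℝ}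
    (hc : 0 < c) : (c • A).PosDef := by
  refine ⟨?_, fun x hx => ?_⟩
  · unfold Matrix.IsHermitian
    rw [Matrix.conjTranspose_smul, hA.1]
    simp
  · have h : (x.sum fun i xi => x.sum fun j xj => star xi * (c • A) i j * xj) =
        c * (x.sum fun i xi => x.sum fun j xj => star xi * A i j * xj) := by
      simp only [Finsupp.sum, Finset.mul_sum, Matrix.smul_apply, smul_eq_mul]
      exact Finset.sum_congr rfl fun i _ => Finset.sum_congr rfl fun j _ => by ring
    rw [h]
    exact mul_pos hc (hA.2 hx)

lemma interpS_posDef {T : ℝ} (hT : 0 < T) {Si Sf : Matrix (Fin n) (Fin n) ℝ}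
    (hSi : Si.PosDef) (hSf : Sf.PosDef) {t : ℝ} (ht : t ∈ Icc (0:ℝ) T) :
    (interpS T Si Sf t).PosDef := by
  have h1 : 0 ≤ 1 - t / T := by
    have : t / T ≤ 1 := (div_le_one hT).mpr ht.2
    linarith
  have h2 : 0 ≤ t / T := div_nonneg ht.1 hT.le
  rcases lt_or_eq_of_le h1 with h1' | h1'
  · exact (posDef_smul hSi h1').add_posSemidef (posSemidef_smul hSf.posSemidef h2)
  · have h2' : (0:ℝ) < t / T := by
      have hsum : (1 - t / T) + t / T = 1 := by ring
      nlinarith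
    exact Matrix.PosDef.posSemidef_add (posSemidef_smul hSi.posSemidef h1)
      (posDef_smul hSf h2')

lemma interpS_hasDerivAt {T : ℝ} (Si Sf : Matrix (Fin n) (Fin n) ℝ) (t : ℝ) :
    HasDerivAt (interpS T Si Sf) (interpSd T Si Sf) t := by
  have h1 : HasDerivAt (fun s : ℝ => 1 - s / T) (-(1 / T)) t := by
    simpa using ((hasDerivAt_id t).div_const T).const_sub (1:ℝ)
  have h2 : HasDerivAt (fun s : ℝ => s / T) (1 / T) t := by
    simpa using (hasDerivAt_id t).div_const T
  have := (h1.smul_const Si).add (h2.smul_const Sf)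
  refine this.congr_deriv ?_
  symm
  unfold interpSd
  rw [smul_sub, neg_smul]
  abel

lemma interpS_contDiff {T : ℝ} (Si Sf : Matrix (Fin n) (Fin n) ℝ) :
    ContDiff ℝ 1 (interpS T Si Sf) := by
  unfold interpS
  exact ((contDiff_const.sub (contDiff_id.div_const T)).smul contDiff_const).add
    ((contDiff_id.div_const T).smul contDiff_const)

lemma interpS_isUnit {T : ℝ} (hT : 0 < T) {Si Sf : Matrix (Fin n) (Fin n) ℝ}
    (hSi : Si.PosDef) (hSf : Sf.PosDef) {t : ℝ} (ht : t ∈ Icc (0:ℝ) T) :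
    IsUnit (interpS T Si Sf t) := by
  rw [Matrix.isUnit_iff_isUnit_det]
  exact (isUnit_iff_ne_zero).mpr (interpS_posDef hT hSi hSf ht).det_pos.ne'

lemma interpS_inv_contDiffAt {T : ℝ} (hT : 0 < T) {Si Sf : Matrix (Fin n) (Fin n) ℝ}
    (hSi : Si.PosDef) (hSf : Sf.PosDef) {t : ℝ} (ht : t ∈ Icc (0:ℝ) T) :
    ContDiffAt ℝ 1 (fun s => (interpS T Si Sf s)⁻¹) t := by
  have hu := interpS_isUnit hT hSi hSf ht
  have h1 : ContDiffAt ℝ 1 Ring.inverse (interpS T Si Sf t) := by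
    rw [← hu.unit_spec]
    exact contDiffAt_ringInverse ℝ hu.unit
  have := h1.comp t (interpS_contDiff Si Sf).contDiffAt
  simpa only [Function.comp_def, Matrix.nonsing_inv_eq_ringInverse] using this

lemma interpS_inv_hasDerivAt {T : ℝ} (hT : 0 < T) {Si Sf : Matrix (Fin n) (Fin n) ℝ}
    (hSi : Si.PosDef) (hSf : Sf.PosDef) {t : ℝ} (ht : t ∈ Icc (0:ℝ) T) :
    HasDerivAt (fun s => (interpS T Si Sf s)⁻¹)
      (-((interpS T Si Sf t)⁻¹ * interpSd T Si Sf * (interpS T Si Sf t)⁻¹)) t := by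
  have hu := interpS_isUnit hT hSi hSf ht
  have h1 : HasFDerivAt Ring.inverse
      (-ContinuousLinearMap.mulLeftRight ℝ _ ↑hu.unit⁻¹ ↑hu.unit⁻¹)
      (interpS T Si Sf t) := by
    have h0 := hasFDerivAt_ringInverse (𝕜 := ℝ) hu.unit
    rwa [hu.unit_spec] at h0
  have h2 := h1.comp_hasDerivAt t (interpS_hasDerivAt Si Sf t)
  have h3 : (↑hu.unit⁻¹ : Matrix (Fin n) (Fin n) ℝ) = (interpS T Si Sf t)⁻¹ := by
    rw [Matrix.coe_units_inv, hu.unit_spec]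
  simp only [ContinuousLinearMap.neg_apply, ContinuousLinearMap.mulLeftRight_apply, h3,
    Function.comp_def, Matrix.nonsing_inv_eq_ringInverse] at h2
  simp only [Matrix.nonsing_inv_eq_ringInverse]
  exact h2

variable {m : ℕ}

lemma interpA_hasDerivAt {T : ℝ} (hT : 0 < T) (B : Matrix (Fin n) (Fin m) ℝ)
    {Si Sf : Matrix (Fin n) (Fin n) ℝ}
    (hSi : Si.PosDef) (hSf : Sf.PosDef) {t : ℝ} (ht : t ∈ Icc (0:ℝ) T) :
    HasDerivAt (interpA T B Si Sf) (interpAd T B Si Sf t) t := by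
  have h := ((interpS_inv_hasDerivAt hT hSi hSf ht).const_mul
    (interpSd T Si Sf - B * Bᵀ)).const_smul (1 / 2 : ℝ)
  refine h.congr_deriv ?_
  symm
  unfold interpAd
  rw [mul_neg, smul_neg, ← neg_smul]
  ring_nf
  simp only [mul_assoc]

lemma interpA_contDiffAt {T : ℝ} (hT : 0 < T) (B : Matrix (Fin n) (Fin m) ℝ)
    {Si Sf : Matrix (Fin n) (Fin n) ℝ}
    (hSi : Si.PosDef) (hSf : Sf.PosDef) {t : ℝ} (ht : t ∈ Icc (0:ℝ) T) :
    ContDiffAt ℝ 1 (interpA T B Si Sf) t := by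
  exact (contDiffAt_const.mul (interpS_inv_contDiffAt hT hSi hSf ht)).const_smul _

lemma interpS_symm {T : ℝ} (hT : 0 < T) {Si Sf : Matrix (Fin n) (Fin n) ℝ}
    (hSi : Si.PosDef) (hSf : Sf.PosDef) {t : ℝ} (ht : t ∈ Icc (0:ℝ) T) :
    (interpS T Si Sf t)ᵀ = interpS T Si Sf t := by
  have h := (interpS_posDef hT hSi hSf ht).1
  rwa [Matrix.IsHermitian, Matrix.conjTranspose_eq_transpose_of_trivial] at h

lemma interpSd_symm {T : ℝ} {Si Sf : Matrix (Fin n) (Fin n) ℝ}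
    (hSi : Si.PosDef) (hSf : Sf.PosDef) :
    (interpSd T Si Sf)ᵀ = interpSd T Si Sf := by
  have h1 : Siᵀ = Si := by
    have := hSi.1; rwa [Matrix.IsHermitian, Matrix.conjTranspose_eq_transpose_of_trivial] at this
  have h2 : Sfᵀ = Sf := by
    have := hSf.1; rwa [Matrix.IsHermitian, Matrix.conjTranspose_eq_transpose_of_trivial] at this
  unfold interpSd
  rw [Matrix.transpose_smul, Matrix.transpose_sub, h1, h2]

lemma interp_feasible {T : ℝ} (hT : 0 < T) (B : Matrix (Fin n) (Fin m) ℝ)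
    {Si Sf : Matrix (Fin n) (Fin n) ℝ}
    (hSi : Si.PosDef) (hSf : Sf.PosDef) {t : ℝ} (ht : t ∈ Icc (0:ℝ) T) :
    interpSd T Si Sf =
      interpA T B Si Sf t * interpS T Si Sf t +
      interpS T Si Sf t * (interpA T B Si Sf t)ᵀ + B * Bᵀ := by
  set S := interpS T Si Sf t with hS
  set C := interpSd T Si Sf - B * Bᵀ with hC
  have hdet : IsUnit S.det := by
    exact isUnit_iff_ne_zero.mpr (interpS_posDef hT hSi hSf ht).det_pos.ne'
  have key1 : interpA T B Si Sf t * S = (1 / 2 : ℝ) • C := by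
    show ((1 / 2 : ℝ) • (C * S⁻¹)) * S = _
    rw [Matrix.smul_mul, mul_assoc, Matrix.nonsing_inv_mul _ hdet, mul_one]
  have hCT : Cᵀ = C := by
    rw [hC, Matrix.transpose_sub, interpSd_symm hSi hSf, Matrix.transpose_mul,
      Matrix.transpose_transpose]
  have key2 : S * (interpA T B Si Sf t)ᵀ = (1 / 2 : ℝ) • C := by
    show S * ((1 / 2 : ℝ) • (C * S⁻¹))ᵀ = _
    rw [Matrix.transpose_smul, Matrix.transpose_mul, Matrix.transpose_nonsing_inv,
      interpS_symm hT hSi hSf ht, hCT, Matrix.mul_smul, ← mul_assoc,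
      Matrix.mul_nonsing_inv _ hdet, one_mul]
  rw [key1, key2, ← add_smul]
  norm_num
  rw [hC]
  abel

lemma interpA_entry_contDiffOn {T : ℝ} (hT : 0 < T) (B : Matrix (Fin n) (Fin m) ℝ)
    {Si Sf : Matrix (Fin n) (Fin n) ℝ} (hSi : Si.PosDef) (hSf : Sf.PosDef) (i j : Fin n) :
    ContDiffOn ℝ 1 (fun t => interpA T B Si Sf t i j) (Icc (0:ℝ) T) := by
  intro t ht
  have := ((entryCLM i j).contDiff.contDiffAt).comp t (interpA_contDiffAt hT B hSi hSf ht)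
  exact this.contDiffWithinAt

lemma interpS_entry_contDiffOn {T : ℝ} (Si Sf : Matrix (Fin n) (Fin n) ℝ) (i j : Fin n) :
    ContDiffOn ℝ 1 (fun t => interpS T Si Sf t i j) (Icc (0:ℝ) T) := by
  have := (entryCLM i j).contDiff.comp (interpS_contDiff (T := T) Si Sf)
  exact fun t ht => (this.contDiffAt
    : ContDiffAt ℝ 1 (fun t => interpS T Si Sf t i j) t).contDiffWithinAt

lemma interpS_entry_hasDeriv {T : ℝ} (Si Sf : Matrix (Fin n) (Fin n) ℝ) (t : ℝ)
    (i j : Fin n) :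
    HasDerivWithinAt (fun s => interpS T Si Sf s i j) (interpSd T Si Sf i j)
      (Icc (0:ℝ) T) t := by
  have := (entryCLM i j).hasFDerivAt.comp_hasDerivWithinAt t
    ((interpS_hasDerivAt (T := T) Si Sf t).hasDerivWithinAt (s := Icc (0:ℝ) T))
  exact this

lemma interpA_entry_hasDeriv {T : ℝ} (hT : 0 < T) (B : Matrix (Fin n) (Fin m) ℝ)
    {Si Sf : Matrix (Fin n) (Fin n) ℝ} (hSi : Si.PosDef) (hSf : Sf.PosDef) {t : ℝ}
    (ht : t ∈ Icc (0:ℝ) T) (i j : Fin n) :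
    HasDerivWithinAt (fun s => interpA T B Si Sf s i j) (interpAd T B Si Sf t i j)
      (Icc (0:ℝ) T) t := by
  have := (entryCLM i j).hasFDerivAt.comp_hasDerivWithinAt t
    ((interpA_hasDerivAt hT B hSi hSf ht).hasDerivWithinAt (s := Icc (0:ℝ) T))
  exact this

lemma interp_integrable₁ {T : ℝ} (hT : 0 < T) (B : Matrix (Fin n) (Fin m) ℝ)
    {Si Sf : Matrix (Fin n) (Fin n) ℝ} (hSi : Si.PosDef) (hSf : Sf.PosDef) :
    IntegrableOn (fun t => Matrix.trace (interpA T B Si Sf t * (interpA T B Si Sf t)ᵀ))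
      (Icc (0:ℝ) T) := by
  have hcontA : ContinuousOn (interpA T B Si Sf) (Icc (0:ℝ) T) := fun t ht =>
    (interpA_contDiffAt hT B hSi hSf ht).continuousAt.continuousWithinAt
  have hcontAT : ContinuousOn (fun t => (interpA T B Si Sf t)ᵀ) (Icc (0:ℝ) T) := by
    have := (transCLM (n := n)).continuous.comp_continuousOn hcontA
    simpa [Function.comp_def] using this
  have : ContinuousOn
      (fun t => Matrix.trace (interpA T B Si Sf t * (interpA T B Si Sf t)ᵀ))
      (Icc (0:ℝ) T) := by
    have := (traceCLM (n := n)).continuous.comp_continuousOn (hcontA.mul hcontAT)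
    simpa [Function.comp_def] using this
  exact this.integrableOn_Icc

lemma interp_integrable₂ {T : ℝ} (hT : 0 < T) (B : Matrix (Fin n) (Fin m) ℝ)
    {Si Sf : Matrix (Fin n) (Fin n) ℝ} (hSi : Si.PosDef) (hSf : Sf.PosDef) :
    IntegrableOn
      (fun t => Matrix.trace (interpAd T B Si Sf t * interpS T Si Sf t *
        (interpAd T B Si Sf t)ᵀ)) (Icc (0:ℝ) T) := by
  have hcontInv : ContinuousOn (fun t => (interpS T Si Sf t)⁻¹) (Icc (0:ℝ) T) := fun t ht =>
    (interpS_inv_contDiffAt hT hSi hSf ht).continuousAt.continuousWithinAt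
  have hcontAd : ContinuousOn (interpAd T B Si Sf) (Icc (0:ℝ) T) := by
    unfold interpAd
    exact ((((continuousOn_const.mul hcontInv).mul continuousOn_const).mul
      hcontInv).const_smul (-(1 / 2) : ℝ))
  have hcontS : ContinuousOn (interpS T Si Sf) (Icc (0:ℝ) T) :=
    (interpS_contDiff Si Sf).continuous.continuousOn
  have hcontAdT : ContinuousOn (fun t => (interpAd T B Si Sf t)ᵀ) (Icc (0:ℝ) T) := by
    have := (transCLM (n := n)).continuous.comp_continuousOn hcontAd
    simpa [Function.comp_def] using this
  have : ContinuousOn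
      (fun t => Matrix.trace (interpAd T B Si Sf t * interpS T Si Sf t *
        (interpAd T B Si Sf t)ᵀ)) (Icc (0:ℝ) T) := by
    have := (traceCLM (n := n)).continuous.comp_continuousOn
      ((hcontAd.mul hcontS).mul hcontAdT)
    simpa [Function.comp_def] using this
  exact this.integrableOn_Icc


end Aux

/-- the linear interpolation of covariances, together with the control
`A_t = ½(Σ̇_t − BBᵀ)Σ_t⁻¹`, is a feasible `C¹` pair for the covariance steering problem,
and both integrands of the attention functional are integrable (so `J_α` is finite). -/
theorem linear_interpolation_feasible
    {n m : ℕ} (T : ℝ) (hT : 0 < T)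
    (B : Matrix (Fin n) (Fin m) ℝ)
    (Si Sf : Matrix (Fin n) (Fin n) ℝ) (hSi : Si.PosDef) (hSf : Sf.PosDef) :
    (∀ t ∈ Icc (0:ℝ) T, (interpS T Si Sf t).PosDef) ∧
    (∀ i j, ContDiffOn ℝ 1 (fun t => interpA T B Si Sf t i j) (Icc (0:ℝ) T)) ∧
    (∀ i j, ContDiffOn ℝ 1 (fun t => interpS T Si Sf t i j) (Icc (0:ℝ) T)) ∧
    (∀ t ∈ Icc (0:ℝ) T, ∀ i j,
      HasDerivWithinAt (fun s => interpS T Si Sf s i j) (interpSd T Si Sf i j)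
        (Icc (0:ℝ) T) t) ∧
    (∀ t ∈ Icc (0:ℝ) T, ∀ i j,
      HasDerivWithinAt (fun s => interpA T B Si Sf s i j) (interpAd T B Si Sf t i j)
        (Icc (0:ℝ) T) t) ∧
    (∀ t ∈ Icc (0:ℝ) T,
      interpSd T Si Sf =
        interpA T B Si Sf t * interpS T Si Sf t +
        interpS T Si Sf t * (interpA T B Si Sf t)ᵀ + B * Bᵀ) ∧
    interpS T Si Sf 0 = Si ∧ interpS T Si Sf T = Sf ∧
    IntegrableOn (fun t => Matrix.trace (interpA T B Si Sf t * (interpA T B Si Sf t)ᵀ))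
      (Icc (0:ℝ) T) ∧
    IntegrableOn
      (fun t => Matrix.trace (interpAd T B Si Sf t * interpS T Si Sf t *
        (interpAd T B Si Sf t)ᵀ)) (Icc (0:ℝ) T) := by
  refine ⟨fun t ht => interpS_posDef hT hSi hSf ht,
    fun i j => interpA_entry_contDiffOn hT B hSi hSf i j,
    fun i j => interpS_entry_contDiffOn Si Sf i j,
    fun t _ i j => interpS_entry_hasDeriv Si Sf t i j,
    fun t ht i j => interpA_entry_hasDeriv hT B hSi hSf ht i j,
    fun t ht => interp_feasible hT B hSi hSf ht,
    ?_, ?_,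
    interp_integrable₁ hT B hSi hSf,
    interp_integrable₂ hT B hSi hSf⟩
  · simp [interpS]
  · simp [interpS, div_self hT.ne']
end

section
/- Fix T>0. Suppose A, Σ, Λ : [0,T] → ℝ^{n×n} are differentiable, Σ_t and Λ_t are symmetric for all t, and for all t ∈ [0,T]: Σ̇_t = A_tΣ_t + Σ_tA_tᵀ, −Λ̇_t = Λ_tA_t + A_tᵀΛ_t, and A_t = Λ_tΣ_t. Then Ȧ_t = A_tA_tᵀ − A_tᵀA_t for all t ∈ [0,T]; consequently the skew-symmetric part Ω_t := ½(A_t − A_tᵀ) is constant in t, and tr(A_t) = tr(A_0) for all t ∈ [0,T]. -/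
open Matrix Set

/-- Helper: a real function with zero derivative within `Icc 0 T` is constant there. -/
lemma const_of_zero_deriv {T : ℝ} (hT : 0 < T) (f : ℝ → ℝ)
    (h : ∀ t ∈ Icc (0:ℝ) T, HasDerivWithinAt f 0 (Icc (0:ℝ) T) t) :
    ∀ t ∈ Icc (0:ℝ) T, f t = f 0 := by
  intro t ht
  exact constant_of_derivWithin_zero
    (fun x hx => (h x hx).differentiableWithinAt)
    (fun x hx => (h x (Ico_subset_Icc_self hx)).derivWithin
      (uniqueDiffOn_Icc hT x (Ico_subset_Icc_self hx))) t ht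

/-- in the zero-noise spatial optimality system, the control satisfies
`Ȧ = AAᵀ − AᵀA`; consequently its skew-symmetric part `Ω = ½(A − Aᵀ)` is constant in
time and `tr(A_t) = tr(A_0)`. -/
theorem zero_noise_control_derivative
    {n : ℕ} (T : ℝ) (hT : 0 < T)
    (A A' S S' Lam Lam' : ℝ → Matrix (Fin n) (Fin n) ℝ)
    (hSsymm : ∀ t ∈ Icc (0:ℝ) T, (S t).IsSymm)
    (hLamSymm : ∀ t ∈ Icc (0:ℝ) T, (Lam t).IsSymm)
    (hAderiv : ∀ t ∈ Icc (0:ℝ) T, ∀ i j,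
      HasDerivWithinAt (fun s => A s i j) (A' t i j) (Icc (0:ℝ) T) t)
    (hSderiv : ∀ t ∈ Icc (0:ℝ) T, ∀ i j,
      HasDerivWithinAt (fun s => S s i j) (S' t i j) (Icc (0:ℝ) T) t)
    (hLamDeriv : ∀ t ∈ Icc (0:ℝ) T, ∀ i j,
      HasDerivWithinAt (fun s => Lam s i j) (Lam' t i j) (Icc (0:ℝ) T) t)
    (hdyn : ∀ t ∈ Icc (0:ℝ) T, S' t = A t * S t + S t * (A t)ᵀ)
    (hadj : ∀ t ∈ Icc (0:ℝ) T, -(Lam' t) = Lam t * A t + (A t)ᵀ * Lam t)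
    (hstat : ∀ t ∈ Icc (0:ℝ) T, A t = Lam t * S t) :
    (∀ t ∈ Icc (0:ℝ) T, A' t = A t * (A t)ᵀ - (A t)ᵀ * A t) ∧
    (∀ t ∈ Icc (0:ℝ) T,
      (1/2 : ℝ) • (A t - (A t)ᵀ) = (1/2 : ℝ) • (A 0 - (A 0)ᵀ)) ∧
    (∀ t ∈ Icc (0:ℝ) T, Matrix.trace (A t) = Matrix.trace (A 0)) := by
  -- Step 1: product rule, A' = Lam' * S + Lam * S' on the interval.
  have key : ∀ t ∈ Icc (0:ℝ) T, A' t = Lam' t * S t + Lam t * S' t := by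
    intro t ht
    ext i j
    have h1 : HasDerivWithinAt (fun s => (Lam s * S s) i j)
        ((Lam' t * S t + Lam t * S' t) i j) (Icc (0:ℝ) T) t := by
      simp only [Matrix.mul_apply, Matrix.add_apply]
      rw [← Finset.sum_add_distrib]
      exact HasDerivWithinAt.fun_sum fun k _ =>
        (hLamDeriv t ht i k).mul (hSderiv t ht k j)
    have h2 : HasDerivWithinAt (fun s => A s i j)
        ((Lam' t * S t + Lam t * S' t) i j) (Icc (0:ℝ) T) t := by
      refine h1.congr (fun s hs => ?_) ?_
      · rw [hstat s hs]
      · rw [hstat t ht]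
    have := (hAderiv t ht i j).derivWithin (uniqueDiffOn_Icc hT t ht)
    rw [← this, h2.derivWithin (uniqueDiffOn_Icc hT t ht)]
  -- Step 2: main derivative identity.
  have main : ∀ t ∈ Icc (0:ℝ) T, A' t = A t * (A t)ᵀ - (A t)ᵀ * A t := by
    intro t ht
    have hLS : Lam t * S t = A t := (hstat t ht).symm
    have hL' : Lam' t = -(Lam t * A t + (A t)ᵀ * Lam t) :=
      neg_eq_iff_eq_neg.mp (hadj t ht)
    rw [key t ht, hL', hdyn t ht]
    calc -(Lam t * A t + (A t)ᵀ * Lam t) * S t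
          + Lam t * (A t * S t + S t * (A t)ᵀ)
        = -(Lam t * (A t * S t)) - (A t)ᵀ * (Lam t * S t)
          + Lam t * (A t * S t) + (Lam t * S t) * (A t)ᵀ := by
          noncomm_ring
      _ = A t * (A t)ᵀ - (A t)ᵀ * A t := by rw [hLS]; noncomm_ring
  refine ⟨main, ?_, ?_⟩
  · -- skew part constant
    intro t ht
    have hconst : ∀ i j, A t i j - A t j i = A 0 i j - A 0 j i := by
      intro i j
      refine const_of_zero_deriv hT (fun s => A s i j - A s j i) ?_ t ht
      intro u hu
      have h := (hAderiv u hu i j).sub (hAderiv u hu j i)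
      have hz : A' u i j - A' u j i = 0 := by
        rw [main u hu]
        simp [Matrix.sub_apply, Matrix.mul_apply, mul_comm]
      rwa [hz] at h
    ext i j
    simp only [Matrix.smul_apply, Matrix.sub_apply, Matrix.transpose_apply]
    rw [hconst i j]
  · -- trace constant
    intro t ht
    have : Matrix.trace (A t) = Matrix.trace (A 0) := by
      refine const_of_zero_deriv hT (fun s => Matrix.trace (A s)) ?_ t ht
      intro u hu
      have h : HasDerivWithinAt (fun s => Matrix.trace (A s))
          (Matrix.trace (A' u)) (Icc (0:ℝ) T) u := by
        simp only [Matrix.trace, Matrix.diag]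
        exact HasDerivWithinAt.fun_sum fun i _ => hAderiv u hu i i
      have hz : Matrix.trace (A' u) = 0 := by
        rw [main u hu, Matrix.trace_sub, Matrix.trace_mul_comm, sub_self]
      rwa [hz] at h
    exact this
end

section
/- Let T>0 and Σ_0, Σ_T ∈ S₊ⁿ. Set M := Σ_0^{−1/2} Σ_T Σ_0^{−1/2} (which is symmetric positive definite), let C be the unique symmetric matrix with exp(C) = M, and define the Fisher–Rao geodesic Σ^F_t := Σ_0^{1/2} exp((t/T)C) Σ_0^{1/2} for t ∈ [0,T] and A^F := (1/(2T)) Σ_0^{1/2} C Σ_0^{−1/2}. Then a matrix A ∈ ℝ^{n×n} satisfies (d/dt)Σ^F_t = AΣ^F_t + Σ^F_t Aᵀ for all t ∈ [0,T] if and only if A = A^F + Σ_0^{1/2} X Σ_0^{−1/2} for some skew-symmetric X with XM = MX. In particular, if M has n distinct eigenvalues then A = A^F is the unique such matrix, and A^F is the unique such matrix satisfying AΣ_0 = Σ_0Aᵀ. -/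
open Matrix Set NormedSpace

section analytic
attribute [local instance] Matrix.linftyOpNormedRing Matrix.linftyOpNormedAlgebra

/-- Entrywise derivative of the Fisher–Rao geodesic. -/
lemma FisherAux.hasDerivAt_entry {n : ℕ} (T : ℝ) (R0 C : Matrix (Fin n) (Fin n) ℝ) (t : ℝ)
    (i j : Fin n) :
    HasDerivAt (fun s => (R0 * exp ((s / T) • C) * R0) i j)
      ((T⁻¹ • (R0 * (C * exp ((t / T) • C)) * R0)) i j) t := by
  have h1 : HasDerivAt (fun s : ℝ => s / T) (1 / T) t := by
    simpa using (hasDerivAt_id t).div_const T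
  have h2 := hasDerivAt_exp_smul_const' (𝕂 := ℝ) C (t / T)
  have h3 : HasDerivAt (fun s : ℝ => exp ((s / T) • C))
      ((1 / T) • (C * exp ((t / T) • C))) t := by have := h2.scomp t h1; exact this
  have h4 := (h3.const_mul R0).mul_const R0
  have h5 := ((Matrix.entryLinearMap ℝ ℝ i j).toContinuousLinearMap.hasFDerivAt).comp_hasDerivAt
    t h4
  refine h5.congr_deriv ?_
  simp [Matrix.mul_smul, Matrix.smul_mul, one_div, LinearMap.coe_toContinuousLinearMap',
    Matrix.entryLinearMap_apply]
  rfl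
end analytic

namespace FisherAux
variable {n : ℕ}

lemma entries_of_commute_diagonal {Y : Matrix (Fin n) (Fin n) ℝ} {d : Fin n → ℝ}
    (h : Y * diagonal d = diagonal d * Y) (i j : Fin n) : Y i j * d j = d i * Y i j := by
  have := Matrix.ext_iff.mpr h i j
  simpa [Matrix.mul_diagonal, Matrix.diagonal_mul] using this

lemma commute_diagonal_of_entries {Y : Matrix (Fin n) (Fin n) ℝ} {d : Fin n → ℝ}
    (h : ∀ i j, Y i j * d j = d i * Y i j) : Y * diagonal d = diagonal d * Y := by
  ext i j
  simpa [Matrix.mul_diagonal, Matrix.diagonal_mul] using h i j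

lemma cancel_left {V : Matrix (Fin n) (Fin n) ℝ} (h1 : star V * V = 1)
    (Z : Matrix (Fin n) (Fin n) ℝ) : star V * (V * Z) = Z := by
  rw [← Matrix.mul_assoc, h1, Matrix.one_mul]

lemma cancel_left' {V : Matrix (Fin n) (Fin n) ℝ} (h2 : V * star V = 1)
    (Z : Matrix (Fin n) (Fin n) ℝ) : V * (star V * Z) = Z := by
  rw [← Matrix.mul_assoc, h2, Matrix.one_mul]

lemma conj_commute {V X D : Matrix (Fin n) (Fin n) ℝ}
    (h1 : star V * V = 1)
    (h : X * (V * D * star V) = (V * D * star V) * X) :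
    (star V * X * V) * D = D * (star V * X * V) := by
  have h' := congrArg (fun Z => star V * (Z * V)) h
  simp only [Matrix.mul_assoc] at h' ⊢
  calc star V * (X * (V * D))
      = star V * (X * (V * (D * (star V * V)))) := by rw [h1, Matrix.mul_one]
    _ = star V * (V * (D * (star V * (X * V)))) := by simpa [Matrix.mul_assoc] using h'
    _ = D * (star V * (X * V)) := cancel_left h1 _

lemma conj_mul {V : Matrix (Fin n) (Fin n) ℝ} (h1 : star V * V = 1)
    (A B : Matrix (Fin n) (Fin n) ℝ) :
    (V * A * star V) * (V * B * star V) = V * (A * B) * star V := by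
  simp only [Matrix.mul_assoc, cancel_left h1]

/-- If `X` commutes with `exp C` for symmetric `C`, then `X` commutes with `C`. -/
lemma commute_of_commute_exp {C X : Matrix (Fin n) (Fin n) ℝ}
    (hC : C.IsHermitian) (h : X * exp C = exp C * X) : X * C = C * X := by
  set V : Matrix (Fin n) (Fin n) ℝ := (hC.eigenvectorUnitary : Matrix (Fin n) (Fin n) ℝ) with hVdef
  have hV1 : star V * V = 1 := Matrix.mem_unitaryGroup_iff'.mp hC.eigenvectorUnitary.2
  have hV2 : V * star V = 1 := Matrix.mem_unitaryGroup_iff.mp hC.eigenvectorUnitary.2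
  have hVinv : V⁻¹ = star V := Matrix.inv_eq_right_inv hV2
  have hVunit : IsUnit V := ⟨⟨V, star V, hV2, hV1⟩, rfl⟩
  have hd : (RCLike.ofReal ∘ hC.eigenvalues : Fin n → ℝ) = hC.eigenvalues := by
    funext k; simp [RCLike.ofReal_real_eq_id]
  have hspec : C = V * diagonal hC.eigenvalues * star V := by
    have := hC.spectral_theorem
    rwa [hd] at this
  have hexp : exp C = V * diagonal (fun k => Real.exp (hC.eigenvalues k)) * star V := by
    conv_lhs => rw [hspec, ← hVinv]
    rw [Matrix.exp_conj V (diagonal hC.eigenvalues) hVunit, Matrix.exp_diagonal, hVinv]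
    congr 2
    funext k
    rw [Pi.exp_def, Real.exp_eq_exp_ℝ]
  rw [hexp] at h
  have hY := conj_commute hV1 h
  have hent := entries_of_commute_diagonal hY
  have hY2 : (star V * X * V) * diagonal hC.eigenvalues
      = diagonal hC.eigenvalues * (star V * X * V) := by
    apply commute_diagonal_of_entries
    intro i j
    rcases eq_or_ne (hC.eigenvalues i) (hC.eigenvalues j) with he | he
    · rw [he, mul_comm]
    · have h0 : (star V * X * V) i j = 0 := by
        by_contra h0
        have hthis := hent i j
        rw [mul_comm (Real.exp (hC.eigenvalues i))] at hthis
        exact he (Real.exp_eq_exp.mp (mul_left_cancel₀ h0 hthis)).symm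
      rw [h0, zero_mul, mul_zero]
  have hX : V * (star V * X * V) * star V = X := by
    simp only [Matrix.mul_assoc, cancel_left' hV2, hV2, Matrix.mul_one]
  calc X * C = (V * (star V * X * V) * star V) * (V * diagonal hC.eigenvalues * star V) := by
        rw [hX, ← hspec]
    _ = V * ((star V * X * V) * diagonal hC.eigenvalues) * star V := conj_mul hV1 _ _
    _ = V * (diagonal hC.eigenvalues * (star V * X * V)) * star V := by rw [hY2]
    _ = (V * diagonal hC.eigenvalues * star V) * (V * (star V * X * V) * star V) :=
        (conj_mul hV1 _ _).symm
    _ = C * X := by rw [hX, ← hspec]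

lemma skew_commute_eq_zero {M X : Matrix (Fin n) (Fin n) ℝ} (hM : M.IsHermitian)
    (hinj : Function.Injective hM.eigenvalues) (hXT : Xᵀ = -X) (h : X * M = M * X) : X = 0 := by
  set V : Matrix (Fin n) (Fin n) ℝ := (hM.eigenvectorUnitary : Matrix (Fin n) (Fin n) ℝ) with hVdef
  have hV1 : star V * V = 1 := Matrix.mem_unitaryGroup_iff'.mp hM.eigenvectorUnitary.2
  have hV2 : V * star V = 1 := Matrix.mem_unitaryGroup_iff.mp hM.eigenvectorUnitary.2
  have hd : (RCLike.ofReal ∘ hM.eigenvalues : Fin n → ℝ) = hM.eigenvalues := by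
    funext k; simp [RCLike.ofReal_real_eq_id]
  have hspec : M = V * diagonal hM.eigenvalues * star V := by
    have := hM.spectral_theorem
    rwa [hd] at this
  have h' : X * (V * diagonal hM.eigenvalues * star V)
      = (V * diagonal hM.eigenvalues * star V) * X := by rw [← hspec]; exact h
  have hent := entries_of_commute_diagonal (conj_commute hV1 h')
  have hsV : star V = Vᵀ := by
    rw [Matrix.star_eq_conjTranspose, Matrix.conjTranspose_eq_transpose_of_trivial]
  have hYT : (star V * X * V)ᵀ = -(star V * X * V) := by
    rw [hsV]
    simp [Matrix.transpose_mul, hXT, Matrix.mul_assoc]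
  have hY0 : star V * X * V = 0 := by
    ext i j
    rcases eq_or_ne i j with rfl | hij
    · have := Matrix.ext_iff.mpr hYT i i
      rw [Matrix.transpose_apply] at this
      simp only [Matrix.neg_apply] at this
      simpa using by linarith
    · have hne : hM.eigenvalues j - hM.eigenvalues i ≠ 0 :=
        sub_ne_zero.mpr (fun hc => hij (hinj hc.symm))
      have h2 := hent i j
      have : (star V * X * V) i j * (hM.eigenvalues j - hM.eigenvalues i) = 0 := by
        ring_nf; linarith [h2]
      simpa using (mul_eq_zero.mp this).resolve_right hne
  have hX : V * (star V * X * V) * star V = X := by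
    simp only [Matrix.mul_assoc, cancel_left' hV2, hV2, Matrix.mul_one]
  rw [← hX, hY0, Matrix.mul_zero, Matrix.zero_mul]

end FisherAux

/-- `A` induces the path `SF` of covariances: `(d/dt)SF_t = A SF_t + SF_t Aᵀ` on `[0,T]`. -/
def InducesPath {n : ℕ} (T : ℝ) (SF : ℝ → Matrix (Fin n) (Fin n) ℝ)
    (A : Matrix (Fin n) (Fin n) ℝ) : Prop :=
  ∀ t ∈ Icc (0:ℝ) T, ∀ i j,
    HasDerivWithinAt (fun s => SF s i j) ((A * SF t + SF t * Aᵀ) i j) (Icc (0:ℝ) T) t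

/-- characterization of the Fisher-geodesic-inducing generators.
Here `R0` is the (unique) symmetric positive definite square root `Σ_0^{1/2}`,
`M = Σ_0^{−1/2} Σ_T Σ_0^{−1/2}`, `C` is the unique symmetric matrix with `exp C = M`,
`A^F = (1/(2T)) Σ_0^{1/2} C Σ_0^{−1/2}` and `Σ^F_t = Σ_0^{1/2} exp((t/T)C) Σ_0^{1/2}`. -/
theorem fisher_inducing_generators
    {n : ℕ} (T : ℝ) (hT : 0 < T)
    (S0 ST R0 C : Matrix (Fin n) (Fin n) ℝ)
    (hS0 : S0.PosDef) (hST : ST.PosDef)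
    (hR0 : R0.PosDef) (hR0sq : R0 * R0 = S0)
    (hCsymm : C.IsSymm) (hCexp : exp C = R0⁻¹ * ST * R0⁻¹) :
    (∀ A : Matrix (Fin n) (Fin n) ℝ,
      InducesPath T (fun t => R0 * exp ((t / T) • C) * R0) A ↔
      ∃ X : Matrix (Fin n) (Fin n) ℝ,
        Xᵀ = -X ∧ X * (R0⁻¹ * ST * R0⁻¹) = (R0⁻¹ * ST * R0⁻¹) * X ∧
        A = (1 / (2 * T)) • (R0 * C * R0⁻¹) + R0 * X * R0⁻¹) ∧
    -- if `M` has `n` distinct eigenvalues, then `A^F` is the unique generator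
    (∀ hM : (R0⁻¹ * ST * R0⁻¹).IsHermitian, Function.Injective hM.eigenvalues →
      ∀ A : Matrix (Fin n) (Fin n) ℝ,
        InducesPath T (fun t => R0 * exp ((t / T) • C) * R0) A →
        A = (1 / (2 * T)) • (R0 * C * R0⁻¹)) ∧
    -- `A^F` is a generator, satisfies `A Σ_0 = Σ_0 Aᵀ`, and is the unique such generator
    InducesPath T (fun t => R0 * exp ((t / T) • C) * R0)
      ((1 / (2 * T)) • (R0 * C * R0⁻¹)) ∧
    ((1 / (2 * T)) • (R0 * C * R0⁻¹)) * S0 = S0 * ((1 / (2 * T)) • (R0 * C * R0⁻¹))ᵀ ∧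
    (∀ A : Matrix (Fin n) (Fin n) ℝ,
      InducesPath T (fun t => R0 * exp ((t / T) • C) * R0) A →
      A * S0 = S0 * Aᵀ →
      A = (1 / (2 * T)) • (R0 * C * R0⁻¹)) := by
  have hdet : IsUnit R0.det := isUnit_iff_ne_zero.mpr hR0.det_pos.ne'
  have c1 : R0 * R0⁻¹ = 1 := Matrix.mul_nonsing_inv R0 hdet
  have c2 : R0⁻¹ * R0 = 1 := Matrix.nonsing_inv_mul R0 hdet
  have c1' : ∀ Z : Matrix (Fin n) (Fin n) ℝ, R0 * (R0⁻¹ * Z) = Z := fun Z => by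
    rw [← Matrix.mul_assoc, c1, Matrix.one_mul]
  have c2' : ∀ Z : Matrix (Fin n) (Fin n) ℝ, R0⁻¹ * (R0 * Z) = Z := fun Z => by
    rw [← Matrix.mul_assoc, c2, Matrix.one_mul]
  have hR0T : R0ᵀ = R0 := by
    have h := hR0.1
    rw [← Matrix.conjTranspose_eq_transpose_of_trivial]
    exact h
  have hRiT : (R0⁻¹)ᵀ = R0⁻¹ := by rw [Matrix.transpose_nonsing_inv, hR0T]
  have hCT : Cᵀ = C := hCsymm
  have hCherm : C.IsHermitian := by
    rw [Matrix.IsHermitian, Matrix.conjTranspose_eq_transpose_of_trivial]; exact hCsymm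
  have hE0 : exp (((0:ℝ) / T) • C) = 1 := by
    rw [zero_div, zero_smul, exp_zero]
  have hET : exp ((T / T) • C) = R0⁻¹ * ST * R0⁻¹ := by
    rw [div_self hT.ne', one_smul, hCexp]
  have hMC : C * (R0⁻¹ * ST * R0⁻¹) = (R0⁻¹ * ST * R0⁻¹) * C := by
    rw [← hCexp]; exact (Commute.refl C).exp_right
  have hCE : ∀ t : ℝ, C * exp ((t / T) • C) = exp ((t / T) • C) * C := fun t =>
    ((Commute.refl C).smul_right _).exp_right
  have hhalf : (T⁻¹ : ℝ) = 1 / (2 * T) + 1 / (2 * T) := by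
    field_simp
    ring
  -- the key reformulation of `InducesPath` as a pointwise matrix equation
  have dkey : ∀ A : Matrix (Fin n) (Fin n) ℝ,
      InducesPath T (fun t => R0 * exp ((t / T) • C) * R0) A ↔
      ∀ t ∈ Icc (0:ℝ) T,
        A * (R0 * exp ((t / T) • C) * R0) + (R0 * exp ((t / T) • C) * R0) * Aᵀ
          = T⁻¹ • (R0 * (C * exp ((t / T) • C)) * R0) := by
    intro A
    constructor
    · intro hA t ht
      ext i j
      have h1 := hA t ht i j
      have h2 := (FisherAux.hasDerivAt_entry T R0 C t i j).hasDerivWithinAt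
        (s := Icc (0:ℝ) T)
      have hu : UniqueDiffWithinAt ℝ (Icc (0:ℝ) T) t := uniqueDiffOn_Icc hT t ht
      exact (h1.derivWithin hu).symm.trans (h2.derivWithin hu)
    · intro hA t ht i j
      have h2 := (FisherAux.hasDerivAt_entry T R0 C t i j).hasDerivWithinAt
        (s := Icc (0:ℝ) T)
      have := hA t ht
      rw [show (A * (R0 * exp ((t / T) • C) * R0) + (R0 * exp ((t / T) • C) * R0) * Aᵀ) i j
          = (T⁻¹ • (R0 * (C * exp ((t / T) • C)) * R0)) i j from by rw [this]]
      exact h2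
  -- the main equivalence
  have main : ∀ A : Matrix (Fin n) (Fin n) ℝ,
      InducesPath T (fun t => R0 * exp ((t / T) • C) * R0) A ↔
      ∃ X : Matrix (Fin n) (Fin n) ℝ,
        Xᵀ = -X ∧ X * (R0⁻¹ * ST * R0⁻¹) = (R0⁻¹ * ST * R0⁻¹) * X ∧
        A = (1 / (2 * T)) • (R0 * C * R0⁻¹) + R0 * X * R0⁻¹ := by
    intro A
    rw [dkey A]
    constructor
    · intro hkey
      have h0 := hkey 0 ⟨le_refl 0, hT.le⟩
      rw [hE0] at h0
      have hBsum : R0⁻¹ * (A * R0) + R0 * (Aᵀ * R0⁻¹) = T⁻¹ • C := by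
        have := congrArg (fun Z => R0⁻¹ * Z * R0⁻¹) h0
        simp only [Matrix.mul_one, mul_add, add_mul, mul_smul_comm, smul_mul_assoc,
          Matrix.mul_assoc, c1, c2, c1', c2', Matrix.one_mul] at this
        simpa [Matrix.mul_assoc, c1, c2, c1', c2'] using this
      have hsub : R0 * (Aᵀ * R0⁻¹) = T⁻¹ • C - R0⁻¹ * (A * R0) := eq_sub_of_add_eq' hBsum
      have hTe := hkey T ⟨hT.le, le_refl T⟩
      rw [hET] at hTe
      have hconj : R0⁻¹ * (A * (R0 * (R0⁻¹ * ST * R0⁻¹)))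
          + (R0⁻¹ * ST * R0⁻¹) * (R0 * (Aᵀ * R0⁻¹))
          = T⁻¹ • (C * (R0⁻¹ * ST * R0⁻¹)) := by
        have := congrArg (fun Z => R0⁻¹ * Z * R0⁻¹) hTe
        simp only [mul_add, add_mul, mul_smul_comm, smul_mul_assoc,
          Matrix.mul_assoc, c1, c2, c1', c2', Matrix.one_mul, Matrix.mul_one] at this
        simpa [Matrix.mul_assoc, c1, c2, c1', c2'] using this
      rw [hsub] at hconj
      have hcomm : (R0⁻¹ * (A * R0)) * (R0⁻¹ * ST * R0⁻¹)
          = (R0⁻¹ * ST * R0⁻¹) * (R0⁻¹ * (A * R0)) := by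
        have h3 : R0⁻¹ * (A * (R0 * (R0⁻¹ * ST * R0⁻¹)))
            = (R0⁻¹ * (A * R0)) * (R0⁻¹ * ST * R0⁻¹) := by
          simp [Matrix.mul_assoc]
        rw [h3, show (R0⁻¹ * ST * R0⁻¹) * (T⁻¹ • C - R0⁻¹ * (A * R0))
            = T⁻¹ • ((R0⁻¹ * ST * R0⁻¹) * C) - (R0⁻¹ * ST * R0⁻¹) * (R0⁻¹ * (A * R0)) from by
          rw [mul_sub, mul_smul_comm]] at hconj
        have h6 : (R0⁻¹ * (A * R0)) * (R0⁻¹ * ST * R0⁻¹)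
            - (R0⁻¹ * ST * R0⁻¹) * (R0⁻¹ * (A * R0)) = 0 := by
          have hx : (R0⁻¹ * (A * R0)) * (R0⁻¹ * ST * R0⁻¹)
              - (R0⁻¹ * ST * R0⁻¹) * (R0⁻¹ * (A * R0))
              = ((R0⁻¹ * (A * R0)) * (R0⁻¹ * ST * R0⁻¹)
                + (T⁻¹ • ((R0⁻¹ * ST * R0⁻¹) * C)
                  - (R0⁻¹ * ST * R0⁻¹) * (R0⁻¹ * (A * R0))))
                - T⁻¹ • ((R0⁻¹ * ST * R0⁻¹) * C) := by abel
          rw [hx, hconj, hMC, sub_self]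
        exact sub_eq_zero.mp h6
      refine ⟨R0⁻¹ * (A * R0) - (1 / (2 * T)) • C, ?_, ?_, ?_⟩
      · have hXTcalc : (R0⁻¹ * (A * R0))ᵀ = R0 * (Aᵀ * R0⁻¹) := by
          simp [Matrix.transpose_mul, hR0T, hRiT, Matrix.mul_assoc]
        rw [Matrix.transpose_sub, hXTcalc, hsub, Matrix.transpose_smul, hCT, hhalf]
        module
      · rw [sub_mul, mul_sub, hcomm, smul_mul_assoc, mul_smul_comm, hMC]
      · rw [Matrix.mul_sub, Matrix.sub_mul, Matrix.mul_smul, Matrix.smul_mul]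
        have : R0 * (R0⁻¹ * (A * R0)) * R0⁻¹ = A := by
          simp [Matrix.mul_assoc, c1, c2, c1', c2']
        rw [this]
        abel
    · rintro ⟨X, hXT, hXM, rfl⟩
      have hXC : X * C = C * X :=
        FisherAux.commute_of_commute_exp hCherm (by rw [hCexp]; exact hXM)
      have hXE : ∀ t : ℝ, X * exp ((t / T) • C) = exp ((t / T) • C) * X := fun t =>
        (((show Commute X C from hXC).smul_right (t / T)).exp_right)
      intro t ht
      have hECr : ∀ Z : Matrix (Fin n) (Fin n) ℝ,
          exp ((t / T) • C) * (C * Z) = C * (exp ((t / T) • C) * Z) := fun Z => by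
        rw [← Matrix.mul_assoc, ← hCE, Matrix.mul_assoc]
      have hEXr : ∀ Z : Matrix (Fin n) (Fin n) ℝ,
          exp ((t / T) • C) * (X * Z) = X * (exp ((t / T) • C) * Z) := fun Z => by
        rw [← Matrix.mul_assoc, ← hXE, Matrix.mul_assoc]
      have hAT : ((1 / (2 * T)) • (R0 * C * R0⁻¹) + R0 * X * R0⁻¹)ᵀ
          = (1 / (2 * T)) • (R0⁻¹ * (C * R0)) - R0⁻¹ * (X * R0) := by
        simp [Matrix.transpose_add, Matrix.transpose_smul, Matrix.transpose_mul, hR0T, hRiT,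
          hCT, hXT, Matrix.mul_assoc, sub_eq_add_neg, Matrix.neg_mul, Matrix.mul_neg]
      rw [hAT]
      simp only [add_mul, mul_add, mul_sub, smul_mul_assoc, mul_smul_comm,
        Matrix.mul_assoc, c1, c2, c1', c2', Matrix.one_mul, Matrix.mul_one]
      simp only [hECr, hEXr, hhalf]
      module
  refine ⟨main, ?_, ?_, ?_, ?_⟩
  · intro hM hinj A hA
    obtain ⟨X, hXT, hXM, rfl⟩ := (main A).mp hA
    have : X = 0 := FisherAux.skew_commute_eq_zero hM hinj hXT hXM
    rw [this, Matrix.mul_zero, Matrix.zero_mul, add_zero]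
  · exact (main _).mpr ⟨0, by simp, by simp, by simp⟩
  · rw [← hR0sq]
    simp [Matrix.transpose_smul, Matrix.transpose_mul, hR0T, hRiT, hCT,
      Matrix.smul_mul, Matrix.mul_smul, Matrix.mul_assoc, c1, c2, c1', c2']
  · intro A hA hsymm
    obtain ⟨X, hXT, hXM, rfl⟩ := (main A).mp hA
    rw [← hR0sq] at hsymm
    have hAT : ((1 / (2 * T)) • (R0 * C * R0⁻¹) + R0 * X * R0⁻¹)ᵀ
        = (1 / (2 * T)) • (R0⁻¹ * (C * R0)) - R0⁻¹ * (X * R0) := by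
      simp [Matrix.transpose_add, Matrix.transpose_smul, Matrix.transpose_mul, hR0T, hRiT,
        hCT, hXT, Matrix.mul_assoc, sub_eq_add_neg, Matrix.neg_mul, Matrix.mul_neg]
    rw [hAT] at hsymm
    have hzero : R0 * (X * R0) = 0 := by
      have h1 : ((1 / (2 * T)) • (R0 * C * R0⁻¹) + R0 * X * R0⁻¹) * (R0 * R0)
          = (1 / (2 * T)) • (R0 * (C * R0)) + R0 * (X * R0) := by
        simp [add_mul, smul_mul_assoc, Matrix.mul_assoc, c1, c2, c1', c2']
      have h2 : (R0 * R0) * ((1 / (2 * T)) • (R0⁻¹ * (C * R0)) - R0⁻¹ * (X * R0))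
          = (1 / (2 * T)) • (R0 * (C * R0)) - R0 * (X * R0) := by
        simp [mul_sub, mul_smul_comm, Matrix.mul_assoc, c1, c2, c1', c2']
      rw [h1, h2] at hsymm
      have hyy : R0 * (X * R0) + R0 * (X * R0) = 0 := by
        have := congrArg (fun Z => Z - (1 / (2 * T)) • (R0 * (C * R0)) + R0 * (X * R0)) hsymm
        simpa [add_sub_cancel_left, sub_add_cancel, add_sub_assoc] using this
      have h2y : (2 : ℝ) • (R0 * (X * R0)) = 0 := by rw [two_smul]; exact hyy
      exact (smul_eq_zero.mp h2y).resolve_left two_ne_zero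
    have : X = 0 := by
      have := congrArg (fun Z => R0⁻¹ * Z * R0⁻¹) hzero
      simpa [Matrix.mul_assoc, c1, c2, c1', c2'] using this
    rw [this, Matrix.mul_zero, Matrix.zero_mul, add_zero]
end

section
/- Let T>0 and Σ_init, Σ_fin ∈ S₊ⁿ. Set M := Σ_init^{−1/2} Σ_fin Σ_init^{−1/2}, let C be the unique symmetric matrix with exp(C) = M, and define A^F := (1/(2T)) Σ_init^{1/2} C Σ_init^{−1/2} and Σ^F_t := Σ_init^{1/2} exp((t/T)C) Σ_init^{1/2}. Suppose A : [0,T] → ℝ^{n×n} is constant (A_t ≡ A), Σ : [0,T] → S₊ⁿ is differentiable with Σ̇_t = AΣ_t + Σ_tAᵀ for all t, Σ_0 = Σ_init, Σ_T = Σ_fin, and AΣ_t = Σ_tAᵀ for all t ∈ [0,T]. Then A = A^F and Σ_t = Σ^F_t for all t ∈ [0,T]. Conversely, the constant control A^F together with Σ^F satisfies all of these conditions. -/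
open Matrix Set NormedSpace

section Helpers
variable {n : ℕ}

/-- entry evaluation as a linear map -/
private def entryLM (i j : Fin n) : Matrix (Fin n) (Fin n) ℝ →ₗ[ℝ] ℝ :=
  { toFun := fun M => M i j, map_add' := fun _ _ => rfl, map_smul' := fun _ _ => rfl }

private lemma expEntry (C : Matrix (Fin n) (Fin n) ℝ) (t : ℝ) (i j : Fin n) :
    HasDerivAt (fun u : ℝ => exp (u • C) i j) ((C * exp (t • C)) i j) t := by
  letI := Matrix.linftyOpNormedRing (n := Fin n) (α := ℝ)
  letI := Matrix.linftyOpNormedAlgebra (n := Fin n) (R := ℝ) (α := ℝ)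
  have h := hasDerivAt_exp_smul_const' (𝕂 := ℝ) C t
  exact ((entryLM i j).toContinuousLinearMap.hasFDerivAt.comp_hasDerivAt t h :)

private lemma exp_symm_inj {B C : Matrix (Fin n) (Fin n) ℝ} (hB : B.IsSymm) (hC : C.IsSymm)
    (h : exp B = exp C) : B = C := by
  letI := Matrix.instL2OpNormedRing (n := Fin n) (𝕜 := ℝ)
  letI := Matrix.instL2OpNormedAlgebra (n := Fin n) (𝕜 := ℝ)
  have hB' : _root_.IsSelfAdjoint B := by
    simpa [_root_.IsSelfAdjoint, Matrix.star_eq_conjTranspose,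
      Matrix.conjTranspose_eq_transpose_of_trivial] using hB.eq
  have hC' : _root_.IsSelfAdjoint C := by
    simpa [_root_.IsSelfAdjoint, Matrix.star_eq_conjTranspose,
      Matrix.conjTranspose_eq_transpose_of_trivial] using hC.eq
  calc B = CFC.log (exp B) := (CFC.log_exp B hB').symm
  _ = CFC.log (exp C) := by rw [h]
  _ = C := CFC.log_exp C hC'

private lemma commute_exp (A : Matrix (Fin n) (Fin n) ℝ) (x : ℝ) :
    A * exp (x • A) = exp (x • A) * A := by
  letI := Matrix.linftyOpNormedRing (n := Fin n) (α := ℝ)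
  letI := Matrix.linftyOpNormedAlgebra (n := Fin n) (R := ℝ) (α := ℝ)
  exact (((Commute.refl A).smul_right x).exp_right)

private lemma mulEntry {f g : ℝ → Matrix (Fin n) (Fin n) ℝ} {f' g' : Matrix (Fin n) (Fin n) ℝ}
    {s : Set ℝ} {t : ℝ}
    (hf : ∀ i j, HasDerivWithinAt (fun u => f u i j) (f' i j) s t)
    (hg : ∀ i j, HasDerivWithinAt (fun u => g u i j) (g' i j) s t) (i j : Fin n) :
    HasDerivWithinAt (fun u => (f u * g u) i j) ((f' * g t + f t * g') i j) s t := by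
  simp only [Matrix.mul_apply, Matrix.add_apply]
  rw [← Finset.sum_add_distrib]
  exact HasDerivWithinAt.fun_sum fun k _ => ((hf i k).mul (hg k j)).congr_deriv (by ring)

private lemma constEntry (M : Matrix (Fin n) (Fin n) ℝ) (s : Set ℝ) (t : ℝ) (i j : Fin n) :
    HasDerivWithinAt (fun _ : ℝ => M i j) ((0 : Matrix (Fin n) (Fin n) ℝ) i j) s t := by
  simpa using hasDerivWithinAt_const t s (M i j)

private lemma constant_of_zero_deriv {T : ℝ} {f : ℝ → ℝ}
    (h : ∀ t ∈ Icc (0:ℝ) T, HasDerivWithinAt f 0 (Icc (0:ℝ) T) t) :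
    ∀ t ∈ Icc (0:ℝ) T, f t = f 0 := by
  apply constant_of_has_deriv_right_zero
  · exact fun t ht => (h t ht).continuousWithinAt
  · intro t ht
    exact (h t ⟨ht.1, ht.2.le⟩).mono_of_mem_nhdsWithin (Icc_mem_nhdsGE_of_mem ht)

private lemma posDef_tmul {M : Matrix (Fin n) (Fin n) ℝ} (hM : IsUnit M) : (Mᵀ * M).PosDef := by
  refine Matrix.PosDef.of_dotProduct_mulVec_pos ?_ ?_
  · have := (Matrix.posSemidef_conjTranspose_mul_self M).isHermitian
    simpa [Matrix.conjTranspose_eq_transpose_of_trivial] using this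
  · intro x hx
    have hMx : M *ᵥ x ≠ 0 := by
      intro h0
      apply hx
      have := congrArg (fun v => M⁻¹ *ᵥ v) h0
      simpa [Matrix.mulVec_mulVec,
        Matrix.nonsing_inv_mul M ((Matrix.isUnit_iff_isUnit_det M).mp hM)] using this
    have heq : (star x) ⬝ᵥ ((Mᵀ * M) *ᵥ x) = (M *ᵥ x) ⬝ᵥ (M *ᵥ x) := by
      simp [star_trivial, ← Matrix.mulVec_mulVec, Matrix.dotProduct_mulVec,
        Matrix.vecMul_transpose]
    rw [heq]
    have h1 : 0 ≤ (M *ᵥ x) ⬝ᵥ (M *ᵥ x) := Finset.sum_nonneg fun k _ => mul_self_nonneg _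
    rcases h1.lt_or_eq with h | h
    · exact h
    · exact absurd (dotProduct_self_eq_zero.mp h.symm) hMx

/-- derivative (entrywise) of the Fisher flow `u ↦ R0 * exp((u/T)•C) * R0`. -/
private lemma fisherDeriv (R0 C : Matrix (Fin n) (Fin n) ℝ) {T : ℝ} (hT : T ≠ 0)
    (s : Set ℝ) (t : ℝ) (i j : Fin n) :
    HasDerivWithinAt (fun u : ℝ => (R0 * exp ((u / T) • C) * R0) i j)
      ((R0 * ((1 / T) • (C * exp ((t / T) • C))) * R0) i j) s t := by
  have hmid : ∀ k l, HasDerivWithinAt (fun u : ℝ => exp ((u / T) • C) k l)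
      (((1 / T) • (C * exp ((t / T) • C))) k l) s t := by
    intro k l
    have h1 : HasDerivAt (fun u : ℝ => u / T) (1 / T) t := by
      simpa using (hasDerivAt_id t).div_const T
    have h2 := (expEntry C (t / T) k l).comp t h1
    refine (h2.congr_deriv ?_).hasDerivWithinAt
    simp [Matrix.smul_apply]; ring
  have hin : ∀ k l, HasDerivWithinAt (fun u : ℝ => (R0 * exp ((u / T) • C)) k l)
      (((0 : Matrix (Fin n) (Fin n) ℝ) * exp ((t / T) • C)
        + R0 * ((1 / T) • (C * exp ((t / T) • C)))) k l) s t :=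
    mulEntry (constEntry R0 s t) hmid
  have h3 := mulEntry (f := fun u => R0 * exp ((u / T) • C)) (g := fun _ => R0) hin
    (constEntry R0 s t) i j
  have he : (((0 : Matrix (Fin n) (Fin n) ℝ) * exp ((t / T) • C)
        + R0 * ((1 / T) • (C * exp ((t / T) • C)))) * R0 +
      (R0 * exp ((t / T) • C)) * (0 : Matrix (Fin n) (Fin n) ℝ))
      = R0 * ((1 / T) • (C * exp ((t / T) • C))) * R0 := by
    simp
  rw [he] at h3
  exact h3

/-- the Fisher–Rao pair is the unique constant-control, commuting
solution of the zero-noise Lyapunov steering problem.  Here `R0 = Σ_init^{1/2}` is the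
unique symmetric positive definite square root, `M = Σ_init^{−1/2} Σ_fin Σ_init^{−1/2}`,
`C` the unique symmetric matrix with `exp C = M`,
`A^F = (1/(2T)) Σ_init^{1/2} C Σ_init^{−1/2}` and
`Σ^F_t = Σ_init^{1/2} exp((t/T)C) Σ_init^{1/2}`. -/




theorem fisher_pair_unique_commuting_constant_control
    {n : ℕ} (T : ℝ) (hT : 0 < T)
    (Si Sf R0 C : Matrix (Fin n) (Fin n) ℝ)
    (hSi : Si.PosDef) (hSf : Sf.PosDef)
    (hR0 : R0.PosDef) (hR0sq : R0 * R0 = Si)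
    (hCsymm : C.IsSymm) (hCexp : exp C = R0⁻¹ * Sf * R0⁻¹) :
    -- uniqueness: any constant commuting solution is the Fisher pair
    (∀ (A : Matrix (Fin n) (Fin n) ℝ) (S : ℝ → Matrix (Fin n) (Fin n) ℝ),
      (∀ t ∈ Icc (0:ℝ) T, ∀ i j,
        HasDerivWithinAt (fun s => S s i j) ((A * S t + S t * Aᵀ) i j) (Icc (0:ℝ) T) t) →
      (∀ t ∈ Icc (0:ℝ) T, (S t).PosDef) →
      S 0 = Si → S T = Sf →
      (∀ t ∈ Icc (0:ℝ) T, A * S t = S t * Aᵀ) →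
      A = (1 / (2 * T)) • (R0 * C * R0⁻¹) ∧
      ∀ t ∈ Icc (0:ℝ) T, S t = R0 * exp ((t / T) • C) * R0) ∧
    -- conversely, the Fisher pair satisfies all of these conditions
    ((∀ t ∈ Icc (0:ℝ) T, ∀ i j,
      HasDerivWithinAt (fun s => (R0 * exp ((s / T) • C) * R0) i j)
        ((((1 / (2 * T)) • (R0 * C * R0⁻¹)) * (R0 * exp ((t / T) • C) * R0) +
          (R0 * exp ((t / T) • C) * R0) * ((1 / (2 * T)) • (R0 * C * R0⁻¹))ᵀ) i j)
        (Icc (0:ℝ) T) t) ∧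
    (∀ t ∈ Icc (0:ℝ) T, (R0 * exp ((t / T) • C) * R0).PosDef) ∧
    R0 * exp ((0 / T : ℝ) • C) * R0 = Si ∧
    R0 * exp ((T / T : ℝ) • C) * R0 = Sf ∧
    (∀ t ∈ Icc (0:ℝ) T,
      ((1 / (2 * T)) • (R0 * C * R0⁻¹)) * (R0 * exp ((t / T) • C) * R0) =
      (R0 * exp ((t / T) • C) * R0) * ((1 / (2 * T)) • (R0 * C * R0⁻¹))ᵀ)) := by
  have hTne : T ≠ 0 := hT.ne'
  have hdet : IsUnit R0.det := (Matrix.isUnit_iff_isUnit_det R0).mp hR0.isUnit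
  have hR0T : R0ᵀ = R0 := by
    have := hR0.isHermitian
    rwa [Matrix.IsHermitian, Matrix.conjTranspose_eq_transpose_of_trivial] at this
  have hR0invT : R0⁻¹ᵀ = R0⁻¹ := by rw [Matrix.transpose_nonsing_inv, hR0T]
  have hinv1 : R0⁻¹ * R0 = 1 := Matrix.nonsing_inv_mul R0 hdet
  have hinv2 : R0 * R0⁻¹ = 1 := Matrix.mul_nonsing_inv R0 hdet
  have hc1 : ∀ X : Matrix (Fin n) (Fin n) ℝ, R0⁻¹ * (R0 * X) = X := fun X => by
    rw [← Matrix.mul_assoc, hinv1, Matrix.one_mul]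
  have hc2 : ∀ X : Matrix (Fin n) (Fin n) ℝ, R0 * (R0⁻¹ * X) = X := fun X => by
    rw [← Matrix.mul_assoc, hinv2, Matrix.one_mul]
  have hAFT : ((1 / (2 * T)) • (R0 * C * R0⁻¹))ᵀ = (1 / (2 * T)) • (R0⁻¹ * C * R0) := by
    rw [Matrix.transpose_smul, Matrix.transpose_mul, Matrix.transpose_mul, hR0invT, hCsymm.eq,
      hR0T, Matrix.mul_assoc]
  have hcommAF : ∀ t : ℝ,
      ((1 / (2 * T)) • (R0 * C * R0⁻¹)) * (R0 * exp ((t / T) • C) * R0) =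
      (R0 * exp ((t / T) • C) * R0) * ((1 / (2 * T)) • (R0 * C * R0⁻¹))ᵀ := by
    intro t
    rw [hAFT, Matrix.smul_mul, Matrix.mul_smul]
    congr 1
    calc R0 * C * R0⁻¹ * (R0 * exp ((t / T) • C) * R0)
        = R0 * (C * exp ((t / T) • C) * R0) := by
          simp only [Matrix.mul_assoc, hc1, hc2]
      _ = R0 * (exp ((t / T) • C) * C * R0) := by rw [commute_exp]
      _ = R0 * exp ((t / T) • C) * R0 * (R0⁻¹ * C * R0) := by
          simp only [Matrix.mul_assoc, hc1, hc2]
  have hAFmul : ∀ t : ℝ,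
      ((1 / (2 * T)) • (R0 * C * R0⁻¹)) * (R0 * exp ((t / T) • C) * R0) =
      (1 / (2 * T)) • (R0 * (C * exp ((t / T) • C)) * R0) := by
    intro t
    rw [Matrix.smul_mul]
    congr 1
    simp only [Matrix.mul_assoc, hc1, hc2]
  have hsum : ∀ t : ℝ,
      ((1 / (2 * T)) • (R0 * C * R0⁻¹)) * (R0 * exp ((t / T) • C) * R0) +
      (R0 * exp ((t / T) • C) * R0) * ((1 / (2 * T)) • (R0 * C * R0⁻¹))ᵀ =
      R0 * ((1 / T) • (C * exp ((t / T) • C))) * R0 := by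
    intro t
    rw [← hcommAF t, hAFmul t, ← add_smul]
    rw [show (1 / (2 * T) + 1 / (2 * T) : ℝ) = 1 / T by ring]
    rw [Matrix.mul_smul, Matrix.smul_mul]
  refine ⟨?_, ?_, ?_, ?_, ?_, fun t _ => hcommAF t⟩
  · -- uniqueness
    intro A S hderiv hpos hS0 hST hAS
    have hSiAT : A * Si = Si * Aᵀ := by
      have := hAS 0 ⟨le_refl 0, hT.le⟩; rwa [hS0] at this
    have hG : ∀ t ∈ Icc (0:ℝ) T, exp ((-2 * t) • A) * S t = Si := by
      have hGd : ∀ t ∈ Icc (0:ℝ) T, ∀ i j,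
          HasDerivWithinAt (fun u => (exp ((-2 * u) • A) * S u) i j)
            ((0 : Matrix (Fin n) (Fin n) ℝ) i j) (Icc (0:ℝ) T) t := by
        intro t ht i j
        have hexp : ∀ k l, HasDerivWithinAt (fun u : ℝ => exp ((-2 * u) • A) k l)
            (((-2 : ℝ) • (A * exp ((-2 * t) • A))) k l) (Icc (0:ℝ) T) t := by
          intro k l
          have h1 : HasDerivAt (fun u : ℝ => -2 * u) (-2) t := by
            simpa using (hasDerivAt_id t).const_mul (-2 : ℝ)
          have h2 := (expEntry A (-2 * t) k l).comp t h1
          refine (h2.congr_deriv ?_).hasDerivWithinAt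
          simp [Matrix.smul_apply]; ring
        have hS' : ∀ k l, HasDerivWithinAt (fun u => S u k l)
            (((2 : ℝ) • (A * S t)) k l) (Icc (0:ℝ) T) t := by
          intro k l
          have h4 := hderiv t ht k l
          rwa [show A * S t + S t * Aᵀ = (2 : ℝ) • (A * S t) by
            rw [← hAS t ht, two_smul]] at h4
        have h3 := mulEntry hexp hS' i j
        rwa [show ((-2 : ℝ) • (A * exp ((-2 * t) • A))) * S t +
            exp ((-2 * t) • A) * ((2 : ℝ) • (A * S t)) = 0 by
          rw [Matrix.smul_mul, Matrix.mul_smul, ← Matrix.mul_assoc, ← commute_exp A (-2 * t),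
            Matrix.mul_assoc, ← add_smul]
          norm_num] at h3
      intro t ht
      have hconst := fun i j => constant_of_zero_deriv
        (f := fun u => (exp ((-2 * u) • A) * S u) i j) (fun τ hτ => by
          simpa using hGd τ hτ i j) t ht
      have heq : exp ((-2 * t) • A) * S t = exp (((-2 : ℝ) * 0) • A) * S 0 :=
        Matrix.ext fun i j => hconst i j
      rw [heq, hS0]
      norm_num [exp_zero]
    have hSt : ∀ t ∈ Icc (0:ℝ) T, S t = exp ((2 * t) • A) * Si := by
      intro t ht
      have hcancel : exp ((2 * t) • A) * exp ((-2 * t) • A) = 1 := by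
        have hcm : Commute ((2 * t) • A) ((-2 * t) • A) :=
          ((Commute.refl A).smul_left (2 * t)).smul_right (-2 * t)
        rw [← Matrix.exp_add_of_commute _ _ hcm]
        rw [show (2 * t) • A + (-2 * t) • A = (0 : ℝ) • A by rw [← add_smul]; ring_nf]
        simp [exp_zero]
      calc S t = 1 * S t := (Matrix.one_mul _).symm
        _ = exp ((2 * t) • A) * (exp ((-2 * t) • A) * S t) := by
            rw [← hcancel, Matrix.mul_assoc]
        _ = exp ((2 * t) • A) * Si := by rw [hG t ht]
    have hexpD : exp ((2 * T) • A) * Si = Sf := by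
      rw [← hST]; exact (hSt T ⟨hT.le, le_refl T⟩).symm
    have hSiAT' : A * (R0 * R0) = R0 * R0 * Aᵀ := by rw [hR0sq]; exact hSiAT
    have key : R0⁻¹ * A * R0 = R0 * Aᵀ * R0⁻¹ := by
      calc R0⁻¹ * A * R0
          = R0⁻¹ * (A * (R0 * R0)) * R0⁻¹ := by
            simp only [Matrix.mul_assoc]
            rw [show R0 * (R0 * R0⁻¹) = R0 from by rw [hinv2, Matrix.mul_one]]
        _ = R0⁻¹ * (R0 * R0 * Aᵀ) * R0⁻¹ := by rw [hSiAT']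
        _ = R0 * Aᵀ * R0⁻¹ := by simp only [Matrix.mul_assoc, hc1]
    have hconj : R0⁻¹ * ((2 * T) • A) * R0 = (2 * T) • (R0⁻¹ * A * R0) := by
      rw [Matrix.mul_smul, Matrix.smul_mul]
    have hBsymm : (R0⁻¹ * ((2 * T) • A) * R0).IsSymm := by
      show (R0⁻¹ * ((2 * T) • A) * R0)ᵀ = _
      rw [hconj, Matrix.transpose_smul, Matrix.transpose_mul, Matrix.transpose_mul, hR0T,
        hR0invT, key, Matrix.mul_assoc]
    have hexpBm : exp (R0⁻¹ * ((2 * T) • A) * R0) = exp C := by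
      rw [Matrix.exp_conj' R0 _ hR0.isUnit, hCexp]
      have hSidet : IsUnit Si.det := (Matrix.isUnit_iff_isUnit_det Si).mp hSi.isUnit
      have hED : exp ((2 * T) • A) = Sf * Si⁻¹ := by
        rw [← hexpD, Matrix.mul_nonsing_inv_cancel_right _ _ hSidet]
      rw [hED, ← hR0sq, Matrix.mul_inv_rev]
      simp only [Matrix.mul_assoc, hc1, hc2, hinv1, hinv2, Matrix.mul_one]
    have hBmC : R0⁻¹ * ((2 * T) • A) * R0 = C := exp_symm_inj hBsymm hCsymm hexpBm
    have hD : (2 * T) • A = R0 * C * R0⁻¹ := by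
      have h5 := congrArg (fun X => R0 * X * R0⁻¹) hBmC
      rw [← h5]
      simp only [Matrix.mul_assoc, hc1, hc2]
      rw [show (2 * T) • A * (R0 * R0⁻¹) = (2 * T) • A from by rw [hinv2, Matrix.mul_one]]
    constructor
    · rw [← hD, smul_smul, show (1 / (2 * T)) * (2 * T) = (1:ℝ) from by field_simp, one_smul]
    · intro t ht
      rw [hSt t ht]
      have h2t : (2 * t) • A = R0 * ((t / T) • C) * R0⁻¹ := by
        rw [show (2 * t) • A = (t / T) • ((2 * T) • A) from by
          rw [smul_smul]; congr 1; field_simp]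
        rw [hD, Matrix.mul_smul, Matrix.smul_mul]
      rw [h2t, Matrix.exp_conj _ _ hR0.isUnit, ← hR0sq]
      simp only [Matrix.mul_assoc, hc1, hc2]
  · -- derivative of the Fisher pair
    intro t ht i j
    have h := fisherDeriv R0 C hTne (Icc (0:ℝ) T) t i j
    rwa [show R0 * ((1 / T) • (C * exp ((t / T) • C))) * R0 =
      ((1 / (2 * T)) • (R0 * C * R0⁻¹)) * (R0 * exp ((t / T) • C) * R0) +
      (R0 * exp ((t / T) • C) * R0) * ((1 / (2 * T)) • (R0 * C * R0⁻¹))ᵀ from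
      (hsum t).symm] at h
  · -- positive definiteness
    intro t ht
    have hsplit : exp ((t / T) • C) = exp ((t / (2 * T)) • C) * exp ((t / (2 * T)) • C) := by
      rw [← Matrix.exp_add_of_commute _ _ (Commute.refl _), ← add_smul]
      congr 2
      field_simp; ring
    have hEsymm : (exp ((t / (2 * T)) • C)).IsSymm := by
      apply Matrix.IsSymm.exp
      show ((t / (2 * T)) • C)ᵀ = _
      rw [Matrix.transpose_smul, hCsymm.eq]
    have hfact : R0 * exp ((t / T) • C) * R0 =
        (exp ((t / (2 * T)) • C) * R0)ᵀ * (exp ((t / (2 * T)) • C) * R0) := by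
      rw [Matrix.transpose_mul, hR0T, hEsymm.eq, hsplit]
      simp only [Matrix.mul_assoc]
    rw [hfact]
    exact posDef_tmul ((Matrix.isUnit_exp _).mul hR0.isUnit)
  · -- initial condition
    norm_num [exp_zero, hR0sq]
  · -- terminal condition
    rw [div_self hTne, one_smul, hCexp]
    simp only [Matrix.mul_assoc, hc1, hc2, hinv1, hinv2, Matrix.mul_one]
end Helpers
end

section
/- Let T>0, α, β ∈ (0,1), and 0 < c ≤ C. Suppose A : [0,T] → ℝ^{n×n} is continuously differentiable and Σ : [0,T] → Sⁿ is continuous with cI ≤ Σ_t ≤ CI for all t ∈ [0,T]. Define the Fisher geodesic-inducing cost F_β(A,Σ) := β∫₀ᵀ tr((A_t − Σ_tA_tᵀΣ_t^{−1}) Σ_t (A_t − Σ_tA_tᵀΣ_t^{−1})ᵀ) dt + (1−β)∫₀ᵀ tr(Ȧ_tΣ_tȦ_tᵀ) dt and the attention functional J_α(A,Σ) := α∫₀ᵀ tr(A_tA_tᵀ)dt + (1−α)∫₀ᵀ tr(Ȧ_tΣ_tȦ_tᵀ)dt. Then F_β(A,Σ) ≤ K · J_α(A,Σ) with K := max(4βC²/(αc),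 (1−β)/(1−α)). -/
open MeasureTheory Matrix Set

open Matrix

variable {n : ℕ}

lemma psd_trace_nonneg {X : Matrix (Fin n) (Fin n) ℝ} (hX : X.PosSemidef) : 0 ≤ X.trace := by
  rw [Matrix.trace]
  refine Finset.sum_nonneg fun i _ => ?_
  have := hX.dotProduct_mulVec_nonneg (Pi.single i 1)
  simpa [Matrix.mulVec_single, Matrix.diag] using this

lemma psd_smul {a : ℝ} {X : Matrix (Fin n) (Fin n) ℝ} (ha : 0 ≤ a) (hX : X.PosSemidef) :
    (a • X).PosSemidef := by
  refine Matrix.PosSemidef.of_dotProduct_mulVec_nonneg ?_ fun x => ?_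
  · unfold Matrix.IsHermitian
    rw [Matrix.conjTranspose_smul, hX.1.eq]
    simp
  · rw [Matrix.smul_mulVec, dotProduct_smul]
    exact mul_nonneg ha (hX.dotProduct_mulVec_nonneg x)

open scoped MatrixOrder in
lemma trace_mul_psd_nonneg {X Y : Matrix (Fin n) (Fin n) ℝ} (hX : X.PosSemidef)
    (hY : Y.PosSemidef) : 0 ≤ (X * Y).trace := by
  have h1 : X = CFC.sqrt X * CFC.sqrt X := (CFC.sqrt_mul_sqrt_self X hX.nonneg).symm
  have h2 : (CFC.sqrt X * Y * CFC.sqrt X).PosSemidef := by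
    have := hY.conjTranspose_mul_mul_same (CFC.sqrt X)
    rwa [(CFC.sqrt_nonneg X).posSemidef.1.eq] at this
  calc (0:ℝ) ≤ (CFC.sqrt X * Y * CFC.sqrt X).trace := psd_trace_nonneg h2
    _ = (X * Y).trace := by
        rw [Matrix.trace_mul_cycle, ← h1]

open scoped MatrixOrder in
set_option maxHeartbeats 2000000 in
lemma key_ineq (c C : ℝ) (hc : 0 < c) (hcC : c ≤ C) (A S : Matrix (Fin n) (Fin n) ℝ)
    (hS : S.IsSymm) (h1 : (S - c • (1 : Matrix (Fin n) (Fin n) ℝ)).PosSemidef)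
    (h2 : (C • (1 : Matrix (Fin n) (Fin n) ℝ) - S).PosSemidef) :
    ((A - S * Aᵀ * S⁻¹) * S * (A - S * Aᵀ * S⁻¹)ᵀ).trace ≤
      4 * C ^ 2 / c * (A * Aᵀ).trace := by
  have hC : (0:ℝ) < C := lt_of_lt_of_le hc hcC
  -- S is positive definite
  have hc1 : (c • (1 : Matrix (Fin n) (Fin n) ℝ)).PosDef := by
    rw [Matrix.smul_one_eq_diagonal]
    exact Matrix.posDef_diagonal_iff.2 fun _ => hc
  have hSpd : S.PosDef := by
    have := Matrix.PosDef.posSemidef_add h1 hc1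
    simpa using this
  have hSps : S.PosSemidef := hSpd.posSemidef
  have hdet : IsUnit S.det := hSpd.det_pos.ne'.isUnit
  have hSiSymm : (S⁻¹)ᵀ = S⁻¹ := by
    rw [Matrix.transpose_nonsing_inv, hS.eq]
  have hSinv_pd : (S⁻¹).PosDef := hSpd.inv
  have hSS : S * S⁻¹ = 1 := Matrix.mul_nonsing_inv S hdet
  have hSS' : S⁻¹ * S = 1 := Matrix.nonsing_inv_mul S hdet
  -- abbreviations
  set Y := S * Aᵀ * S⁻¹ with hY
  have hYT : Yᵀ = S⁻¹ * (A * S) := by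
    rw [hY, Matrix.transpose_mul, Matrix.transpose_mul, hSiSymm, Matrix.transpose_transpose,
      hS.eq]
  -- trace identity: tr((A-Y)S(A-Y)ᵀ) + tr((A+Y)S(A+Y)ᵀ) = 2 tr(ASAᵀ) + 2 tr(YSYᵀ)
  have hplus : (0:ℝ) ≤ ((A + Y) * S * (A + Y)ᵀ).trace := by
    have := hSps.mul_mul_conjTranspose_same (A + Y)
    rw [Matrix.conjTranspose_eq_transpose_of_trivial] at this
    exact psd_trace_nonneg this
  have hid : ((A - Y) * S * (A - Y)ᵀ).trace + ((A + Y) * S * (A + Y)ᵀ).trace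
      = 2 * (A * S * Aᵀ).trace + 2 * (Y * S * Yᵀ).trace := by
    simp only [Matrix.sub_mul, Matrix.mul_sub, Matrix.add_mul, Matrix.mul_add,
      Matrix.transpose_sub, Matrix.transpose_add, Matrix.trace_sub, Matrix.trace_add]
    ring
  -- bound tr(ASAᵀ)
  have hAAt : (A * Aᵀ).PosSemidef := by
    have := Matrix.posSemidef_self_mul_conjTranspose A
    rwa [Matrix.conjTranspose_eq_transpose_of_trivial] at this
  have hAtA : (Aᵀ * A).PosSemidef := by
    have := Matrix.posSemidef_conjTranspose_mul_self A
    rwa [Matrix.conjTranspose_eq_transpose_of_trivial] at this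
  have htrAAt : (0:ℝ) ≤ (A * Aᵀ).trace := psd_trace_nonneg hAAt
  have hb1 : (A * S * Aᵀ).trace ≤ C * (A * Aᵀ).trace := by
    have h := trace_mul_psd_nonneg hAtA h2
    have e : (Aᵀ * A * (C • (1 : Matrix (Fin n) (Fin n) ℝ) - S)).trace
        = C * (A * Aᵀ).trace - (A * S * Aᵀ).trace := by
      rw [Matrix.mul_sub, Matrix.trace_sub, Matrix.mul_smul, Matrix.trace_smul, Matrix.mul_one]
      rw [Matrix.trace_mul_cycle Aᵀ A S, Matrix.trace_mul_comm Aᵀ A,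
        Matrix.trace_mul_cycle S Aᵀ A, smul_eq_mul]
    rw [e] at h; linarith
  -- bound tr(YSYᵀ)
  have hYSY : Y * S * Yᵀ = S * Aᵀ * S⁻¹ * A * S := by
    rw [hYT, hY]
    calc S * Aᵀ * S⁻¹ * S * (S⁻¹ * (A * S))
        = S * Aᵀ * (S⁻¹ * S) * S⁻¹ * (A * S) := by noncomm_ring
      _ = S * Aᵀ * S⁻¹ * A * S := by rw [hSS']; noncomm_ring
  set X0 := Aᵀ * S⁻¹ * A with hX0
  have hX0psd : X0.PosSemidef := by
    have := hSinv_pd.posSemidef.conjTranspose_mul_mul_same A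
    rwa [Matrix.conjTranspose_eq_transpose_of_trivial] at this
  have htrY : (Y * S * Yᵀ).trace = (X0 * (S * S)).trace := by
    rw [hYSY, hX0]
    have e : S * Aᵀ * S⁻¹ * A * S = S * (Aᵀ * S⁻¹ * A * S) := by noncomm_ring
    rw [e, Matrix.trace_mul_comm]
    congr 1
    noncomm_ring
  -- CS - S² is psd
  have hCS : (C • S - S * S).PosSemidef := by
    set R := CFC.sqrt S with hR
    have hRR : R * R = S := CFC.sqrt_mul_sqrt_self S hSps.nonneg
    have hconj := h2.conjTranspose_mul_mul_same R
    rw [(CFC.sqrt_nonneg S).posSemidef.1.eq] at hconj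
    have e : R * (C • (1 : Matrix (Fin n) (Fin n) ℝ) - S) * R = C • S - S * S := by
      rw [Matrix.mul_sub, Matrix.sub_mul, Matrix.mul_smul, Matrix.mul_one, Matrix.smul_mul, hRR]
      congr 1
      rw [← hRR]; noncomm_ring
    rwa [e] at hconj
  -- c⁻¹ 1 - S⁻¹ is psd
  have hcInv : ((c⁻¹ : ℝ) • (1 : Matrix (Fin n) (Fin n) ℝ) - S⁻¹).PosSemidef := by
    have hSi : (S⁻¹).PosSemidef := hSinv_pd.posSemidef
    set R := CFC.sqrt S⁻¹ with hR
    have hRR : R * R = S⁻¹ := CFC.sqrt_mul_sqrt_self S⁻¹ hSi.nonneg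
    have hRdet : IsUnit R.det := by
      have : R.det * R.det = S⁻¹.det := by rw [← Matrix.det_mul, hRR]
      have hd : S⁻¹.det ≠ 0 := hSinv_pd.det_pos.ne'
      refine isUnit_iff_ne_zero.2 fun h0 => hd ?_
      rw [← this, h0, mul_zero]
    have hRSR : R * S * R = 1 := by
      have hSinv : S = (R * R)⁻¹ := by rw [hRR, Matrix.nonsing_inv_nonsing_inv S hdet]
      have e0 : R * (R⁻¹ * R⁻¹) * R = (R * R⁻¹) * ((R⁻¹) * R) := by noncomm_ring
      rw [hSinv, Matrix.mul_inv_rev, e0, Matrix.mul_nonsing_inv _ hRdet,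
        Matrix.nonsing_inv_mul _ hRdet, Matrix.one_mul]
    have hmid : ((c⁻¹ : ℝ) • S - 1).PosSemidef := by
      have := psd_smul (a := c⁻¹) (inv_nonneg.2 hc.le) h1
      have e : (c⁻¹ : ℝ) • (S - c • (1 : Matrix (Fin n) (Fin n) ℝ)) = c⁻¹ • S - 1 := by
        rw [smul_sub, smul_smul, inv_mul_cancel₀ hc.ne', one_smul]
      rwa [e] at this
    have hconj := hmid.conjTranspose_mul_mul_same R
    rw [(CFC.sqrt_nonneg S⁻¹).posSemidef.1.eq] at hconj
    have e : R * ((c⁻¹ : ℝ) • S - 1) * R = (c⁻¹ : ℝ) • (1 : Matrix (Fin n) (Fin n) ℝ) - S⁻¹ := by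
      rw [Matrix.mul_sub, Matrix.sub_mul, Matrix.mul_smul, Matrix.smul_mul, hRSR,
        Matrix.mul_one, hRR]
    rwa [e] at hconj
  -- chain of bounds for tr(X0 * S²)
  have hx1 : (X0 * (S * S)).trace ≤ C * (X0 * S).trace := by
    have h := trace_mul_psd_nonneg hX0psd hCS
    have e : (X0 * (C • S - S * S)).trace = C * (X0 * S).trace - (X0 * (S * S)).trace := by
      rw [Matrix.mul_sub, Matrix.trace_sub, Matrix.mul_smul, Matrix.trace_smul]
      simp
    rw [e] at h; linarith
  have hx2 : (X0 * S).trace ≤ C * X0.trace := by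
    have h := trace_mul_psd_nonneg hX0psd h2
    have e : (X0 * (C • (1 : Matrix (Fin n) (Fin n) ℝ) - S)).trace
        = C * X0.trace - (X0 * S).trace := by
      rw [Matrix.mul_sub, Matrix.trace_sub, Matrix.mul_smul, Matrix.trace_smul, Matrix.mul_one]
      simp
    rw [e] at h; linarith
  have hx3 : X0.trace ≤ c⁻¹ * (A * Aᵀ).trace := by
    have h := trace_mul_psd_nonneg hcInv hAAt
    have e : (((c⁻¹ : ℝ) • (1 : Matrix (Fin n) (Fin n) ℝ) - S⁻¹) * (A * Aᵀ)).trace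
        = c⁻¹ * (A * Aᵀ).trace - X0.trace := by
      rw [Matrix.sub_mul, Matrix.trace_sub, Matrix.smul_mul, Matrix.trace_smul, Matrix.one_mul]
      have e2 : (S⁻¹ * (A * Aᵀ)).trace = X0.trace := by
        rw [Matrix.trace_mul_comm, hX0, Matrix.trace_mul_cycle Aᵀ S⁻¹ A]
      rw [e2]
      simp
    rw [e] at h; linarith
  have hX0nn : (0:ℝ) ≤ X0.trace := psd_trace_nonneg hX0psd
  have hX0Snn : (0:ℝ) ≤ (X0 * S).trace := trace_mul_psd_nonneg hX0psd hSps
  have hy : (Y * S * Yᵀ).trace ≤ C ^ 2 / c * (A * Aᵀ).trace := by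
    rw [htrY]
    calc (X0 * (S * S)).trace ≤ C * (X0 * S).trace := hx1
      _ ≤ C * (C * X0.trace) := mul_le_mul_of_nonneg_left hx2 hC.le
      _ ≤ C * (C * (c⁻¹ * (A * Aᵀ).trace)) := mul_le_mul_of_nonneg_left (mul_le_mul_of_nonneg_left hx3 hC.le) hC.le
      _ = C ^ 2 / c * (A * Aᵀ).trace := by field_simp
  have hCle : C ≤ C ^ 2 / c := by
    rw [le_div_iff₀ hc]; nlinarith
  have hfin : C * (A * Aᵀ).trace ≤ C ^ 2 / c * (A * Aᵀ).trace :=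
    mul_le_mul_of_nonneg_right hCle htrAAt
  have h4 : (4:ℝ) * C ^ 2 / c * (A * Aᵀ).trace = 4 * (C ^ 2 / c * (A * Aᵀ).trace) := by ring
  rw [h4]
  linarith [hid, hplus, hb1, hy, hfin]

open MeasureTheory Matrix Set


/-- Loewner order: `P ≤ Q` iff `Q − P` is positive semidefinite. -/
def LoewnerLE {n : ℕ} (P Q : Matrix (Fin n) (Fin n) ℝ) : Prop :=
  (Q - P).PosSemidef

/-- the Fisher geodesic-inducing cost is dominated by a constant multiple
of the attention functional: `F_β(A,Σ) ≤ K · J_α(A,Σ)` with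
`K = max(4βC²/(αc), (1−β)/(1−α))`, whenever `cI ≤ Σ_t ≤ CI`. -/
theorem fisher_cost_le_attention
    {n : ℕ} (T α β c C : ℝ) (hT : 0 < T)
    (hα : α ∈ Set.Ioo (0:ℝ) 1) (hβ : β ∈ Set.Ioo (0:ℝ) 1)
    (hc : 0 < c) (hcC : c ≤ C)
    (A A' S : ℝ → Matrix (Fin n) (Fin n) ℝ)
    -- A is continuously differentiable with derivative A'
    (hAderiv : ∀ t ∈ Icc (0:ℝ) T, ∀ i j,
      HasDerivWithinAt (fun s => A s i j) (A' t i j) (Icc (0:ℝ) T) t)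
    (hA'cont : ∀ i j, ContinuousOn (fun t => A' t i j) (Icc (0:ℝ) T))
    -- Σ is continuous, symmetric-valued, and `cI ≤ Σ_t ≤ CI`
    (hScont : ∀ i j, ContinuousOn (fun t => S t i j) (Icc (0:ℝ) T))
    (hSsymm : ∀ t ∈ Icc (0:ℝ) T, (S t).IsSymm)
    (hbounds : ∀ t ∈ Icc (0:ℝ) T,
      LoewnerLE (c • (1 : Matrix (Fin n) (Fin n) ℝ)) (S t) ∧
      LoewnerLE (S t) (C • (1 : Matrix (Fin n) (Fin n) ℝ))) :
    β * (∫ t in (0:ℝ)..T,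
        Matrix.trace ((A t - S t * (A t)ᵀ * (S t)⁻¹) * S t *
          (A t - S t * (A t)ᵀ * (S t)⁻¹)ᵀ)) +
    (1 - β) * (∫ t in (0:ℝ)..T, Matrix.trace (A' t * S t * (A' t)ᵀ)) ≤
    max (4 * β * C ^ 2 / (α * c)) ((1 - β) / (1 - α)) *
      (α * (∫ t in (0:ℝ)..T, Matrix.trace (A t * (A t)ᵀ)) +
       (1 - α) * (∫ t in (0:ℝ)..T, Matrix.trace (A' t * S t * (A' t)ᵀ))) := by

  obtain ⟨hα0, hα1⟩ := hα
  obtain ⟨hβ0, hβ1⟩ := hβ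
  have hC : (0:ℝ) < C := lt_of_lt_of_le hc hcC
  have h0T : (0:ℝ) ≤ T := hT.le
  -- matrix-valued continuity
  have hAc : ContinuousOn A (Icc (0:ℝ) T) := by
    rw [continuousOn_iff_continuous_restrict]
    exact continuous_matrix fun i j => continuousOn_iff_continuous_restrict.1
      (fun t ht => (hAderiv t ht i j).continuousWithinAt) 
  have hA'c : ContinuousOn A' (Icc (0:ℝ) T) := by
    rw [continuousOn_iff_continuous_restrict]
    exact continuous_matrix fun i j => continuousOn_iff_continuous_restrict.1 (hA'cont i j)
  have hSc : ContinuousOn S (Icc (0:ℝ) T) := by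
    rw [continuousOn_iff_continuous_restrict]
    exact continuous_matrix fun i j => continuousOn_iff_continuous_restrict.1 (hScont i j)
  have hSpdt : ∀ t ∈ Icc (0:ℝ) T, (S t).PosDef := by
    intro t ht
    have h1 := (hbounds t ht).1
    have hc1 : (c • (1 : Matrix (Fin n) (Fin n) ℝ)).PosDef := by
      rw [Matrix.smul_one_eq_diagonal]
      exact Matrix.posDef_diagonal_iff.2 fun _ => hc
    have := Matrix.PosDef.posSemidef_add h1 hc1
    simpa using this
  have hSinvc : ContinuousOn (fun t => (S t)⁻¹) (Icc (0:ℝ) T) := by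
    intro t ht
    have hdet : ((S t).det) ≠ 0 := (hSpdt t ht).det_pos.ne'
    have h1 : ContinuousAt Ring.inverse ((S t).det) := by
      rw [Ring.inverse_eq_inv']
      exact continuousAt_inv₀ hdet
    exact (continuousAt_matrix_inv (S t) h1).comp_continuousWithinAt (hSc t ht)
  have htr : Continuous fun M : Matrix (Fin n) (Fin n) ℝ => M.trace :=
    continuous_id.matrix_trace
  have htp : Continuous fun M : Matrix (Fin n) (Fin n) ℝ => Mᵀ :=
    continuous_id.matrix_transpose
  have hAtc : ContinuousOn (fun t => (A t)ᵀ) (Icc (0:ℝ) T) := htp.comp_continuousOn hAc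
  have hMc : ContinuousOn (fun t => A t - S t * (A t)ᵀ * (S t)⁻¹) (Icc (0:ℝ) T) :=
    hAc.sub (((hSc.mul hAtc).mul hSinvc))
  have hMtc : ContinuousOn (fun t => (A t - S t * (A t)ᵀ * (S t)⁻¹)ᵀ) (Icc (0:ℝ) T) :=
    htp.comp_continuousOn hMc
  have hF1 : ContinuousOn (fun t =>
      Matrix.trace ((A t - S t * (A t)ᵀ * (S t)⁻¹) * S t *
        (A t - S t * (A t)ᵀ * (S t)⁻¹)ᵀ)) (Icc (0:ℝ) T) :=
    htr.comp_continuousOn ((hMc.mul hSc).mul hMtc)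
  have hF0 : ContinuousOn (fun t => Matrix.trace (A t * (A t)ᵀ)) (Icc (0:ℝ) T) :=
    htr.comp_continuousOn (hAc.mul hAtc)
  have hInt1 : IntervalIntegrable (fun t =>
      Matrix.trace ((A t - S t * (A t)ᵀ * (S t)⁻¹) * S t *
        (A t - S t * (A t)ᵀ * (S t)⁻¹)ᵀ)) volume 0 T := by
    apply ContinuousOn.intervalIntegrable
    rwa [Set.uIcc_of_le h0T]
  have hInt0 : IntervalIntegrable (fun t => 4 * C ^ 2 / c * Matrix.trace (A t * (A t)ᵀ))
      volume 0 T := by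
    apply ContinuousOn.intervalIntegrable
    rw [Set.uIcc_of_le h0T]
    exact continuousOn_const.mul hF0
  -- pointwise inequality and integral comparison
  have hpt : ∀ t ∈ Icc (0:ℝ) T,
      Matrix.trace ((A t - S t * (A t)ᵀ * (S t)⁻¹) * S t *
        (A t - S t * (A t)ᵀ * (S t)⁻¹)ᵀ) ≤ 4 * C ^ 2 / c * Matrix.trace (A t * (A t)ᵀ) :=
    fun t ht => key_ineq c C hc hcC (A t) (S t) (hSsymm t ht) (hbounds t ht).1 (hbounds t ht).2
  set I1 := ∫ t in (0:ℝ)..T, Matrix.trace ((A t - S t * (A t)ᵀ * (S t)⁻¹) * S t *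
      (A t - S t * (A t)ᵀ * (S t)⁻¹)ᵀ) with hI1def
  set I0 := ∫ t in (0:ℝ)..T, Matrix.trace (A t * (A t)ᵀ) with hI0def
  set I2 := ∫ t in (0:ℝ)..T, Matrix.trace (A' t * S t * (A' t)ᵀ) with hI2def
  have hI10 : I1 ≤ 4 * C ^ 2 / c * I0 := by
    have := intervalIntegral.integral_mono_on h0T hInt1 hInt0 hpt
    rwa [intervalIntegral.integral_const_mul] at this
  have hI0nn : (0:ℝ) ≤ I0 := by
    apply intervalIntegral.integral_nonneg h0T
    intro u hu
    refine psd_trace_nonneg ?_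
    have := Matrix.posSemidef_self_mul_conjTranspose (A u)
    rwa [Matrix.conjTranspose_eq_transpose_of_trivial] at this
  have hI2nn : (0:ℝ) ≤ I2 := by
    apply intervalIntegral.integral_nonneg h0T
    intro u hu
    refine psd_trace_nonneg ?_
    have := (hSpdt u hu).posSemidef.mul_mul_conjTranspose_same (A' u)
    rwa [Matrix.conjTranspose_eq_transpose_of_trivial] at this
  -- final arithmetic
  set K := max (4 * β * C ^ 2 / (α * c)) ((1 - β) / (1 - α)) with hK
  have hK1 : 4 * β * C ^ 2 / (α * c) ≤ K := le_max_left _ _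
  have hK2 : (1 - β) / (1 - α) ≤ K := le_max_right _ _
  have e1 : β * (4 * C ^ 2 / c * I0) = (4 * β * C ^ 2 / (α * c)) * (α * I0) := by
    field_simp
  have h1' : β * I1 ≤ β * (4 * C ^ 2 / c * I0) := mul_le_mul_of_nonneg_left hI10 hβ0.le
  have hαI0 : (0:ℝ) ≤ α * I0 := mul_nonneg hα0.le hI0nn
  have h2' : (4 * β * C ^ 2 / (α * c)) * (α * I0) ≤ K * (α * I0) :=
    mul_le_mul_of_nonneg_right hK1 hαI0
  have hne : (1:ℝ) - α ≠ 0 := by linarith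
  have e2 : (1 - β) * I2 = ((1 - β) / (1 - α)) * ((1 - α) * I2) := by
    rw [div_mul_eq_mul_div, eq_div_iff hne]
    ring
  have hαI2 : (0:ℝ) ≤ (1 - α) * I2 := mul_nonneg (by linarith) hI2nn
  have h3' : ((1 - β) / (1 - α)) * ((1 - α) * I2) ≤ K * ((1 - α) * I2) :=
    mul_le_mul_of_nonneg_right hK2 hαI2
  have hsplit : K * (α * I0 + (1 - α) * I2) = K * (α * I0) + K * ((1 - α) * I2) := mul_add _ _ _
  linarith [h1', h2', h3', e1, e2, hsplit]
end

section
/- Let 0 < c ≤ C, let Σ ∈ ℝ^{n×n} be symmetric with cI ≤ Σ ≤ CI, and let A ∈ ℝ^{n×n} be arbitrary. Then tr((A − ΣAᵀΣ^{−1}) Σ (A − ΣAᵀΣ^{−1})ᵀ) ≤ (4C²/c) · tr(AAᵀ). -/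
open Matrix

section Aux
variable {n : ℕ}

lemma psd_trace_nonneg_s17 {N : Matrix (Fin n) (Fin n) ℝ} (hN : N.PosSemidef) :
    0 ≤ N.trace := by
  rw [Matrix.trace]
  apply Finset.sum_nonneg
  intro i _
  have := hN.diag_nonneg (i := i)
  simpa [Matrix.mulVec_single, dotProduct, Pi.single_apply] using this

lemma conj_trace_nonneg {N : Matrix (Fin n) (Fin n) ℝ} (hN : N.PosSemidef)
    (X : Matrix (Fin n) (Fin n) ℝ) : 0 ≤ (X * N * Xᵀ).trace := by
  have h := psd_trace_nonneg_s17 (hN.mul_mul_conjTranspose_same X)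
  rwa [conjTranspose_eq_transpose_of_trivial] at h

lemma sq_trace_nonneg (X : Matrix (Fin n) (Fin n) ℝ) : 0 ≤ (X * Xᵀ).trace := by
  have := conj_trace_nonneg Matrix.PosSemidef.one X
  simpa using this

lemma tr_conj_le {S : Matrix (Fin n) (Fin n) ℝ} {t : ℝ}
    (h : (t • (1 : Matrix (Fin n) (Fin n) ℝ) - S).PosSemidef)
    (X : Matrix (Fin n) (Fin n) ℝ) :
    (X * S * Xᵀ).trace ≤ t * (X * Xᵀ).trace := by
  have h0 := conj_trace_nonneg h X
  have e : X * (t • (1 : Matrix (Fin n) (Fin n) ℝ) - S) * Xᵀ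
      = t • (X * Xᵀ) - X * S * Xᵀ := by
    rw [Matrix.mul_sub, Matrix.sub_mul]
    simp [Matrix.mul_smul, Matrix.smul_mul]
  rw [e, trace_sub, trace_smul] at h0
  simpa [smul_eq_mul] using sub_nonneg.mp h0

lemma tr_conj_ge {S : Matrix (Fin n) (Fin n) ℝ} {t : ℝ}
    (h : (S - t • (1 : Matrix (Fin n) (Fin n) ℝ)).PosSemidef)
    (X : Matrix (Fin n) (Fin n) ℝ) :
    t * (X * Xᵀ).trace ≤ (X * S * Xᵀ).trace := by
  have h0 := conj_trace_nonneg h X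
  have e : X * (S - t • (1 : Matrix (Fin n) (Fin n) ℝ)) * Xᵀ
      = X * S * Xᵀ - t • (X * Xᵀ) := by
    rw [Matrix.mul_sub, Matrix.sub_mul]
    simp [Matrix.mul_smul, Matrix.smul_mul]
  rw [e, trace_sub, trace_smul] at h0
  simpa [smul_eq_mul] using sub_nonneg.mp h0

end Aux

/-- pointwise bound
`tr((A − ΣAᵀΣ⁻¹) Σ (A − ΣAᵀΣ⁻¹)ᵀ) ≤ (4C²/c) tr(AAᵀ)` whenever `cI ≤ Σ ≤ CI`. -/
theorem fisher_defect_trace_bound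
    {n : ℕ} (c C : ℝ) (hc : 0 < c) (hcC : c ≤ C)
    (S A : Matrix (Fin n) (Fin n) ℝ)
    (hSsymm : S.IsSymm)
    (hlow : LoewnerLE (c • (1 : Matrix (Fin n) (Fin n) ℝ)) S)
    (hhigh : LoewnerLE S (C • (1 : Matrix (Fin n) (Fin n) ℝ))) :
    Matrix.trace ((A - S * Aᵀ * S⁻¹) * S * (A - S * Aᵀ * S⁻¹)ᵀ) ≤
      (4 * C ^ 2 / c) * Matrix.trace (A * Aᵀ) := by
  have hC : 0 < C := lt_of_lt_of_le hc hcC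
  have hlow' : (S - c • (1 : Matrix (Fin n) (Fin n) ℝ)).PosSemidef := hlow
  have hhigh' : (C • (1 : Matrix (Fin n) (Fin n) ℝ) - S).PosSemidef := hhigh
  have hSt : Sᵀ = S := hSsymm
  -- S is positive definite
  have hcI : (c • (1 : Matrix (Fin n) (Fin n) ℝ)).PosDef := by
    rw [Matrix.smul_one_eq_diagonal]
    exact Matrix.posDef_diagonal_iff.mpr (fun _ => hc)
  have hSpd : S.PosDef := by
    have : S = c • (1 : Matrix (Fin n) (Fin n) ℝ)
        + (S - c • (1 : Matrix (Fin n) (Fin n) ℝ)) := by abel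
    rw [this]
    exact hcI.add_posSemidef hlow'
  have hdet : IsUnit S.det := hSpd.det_pos.ne'.isUnit
  have hSS : S * S⁻¹ = 1 := Matrix.mul_nonsing_inv S hdet
  have hSS' : S⁻¹ * S = 1 := Matrix.nonsing_inv_mul S hdet
  have hSipsd : (S⁻¹).PosSemidef := hSpd.inv.posSemidef
  -- square roots
  obtain ⟨R, hRt0, hR20⟩ : ∃ R : Matrix (Fin n) (Fin n) ℝ, Rᵀ = R ∧ R * R = S := by
    open scoped MatrixOrder in
    refine ⟨CFC.sqrt S, ?_, CFC.sqrt_mul_sqrt_self S (Matrix.nonneg_iff_posSemidef.mpr hSpd.posSemidef)⟩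
    have := (Matrix.nonneg_iff_posSemidef.mp (CFC.sqrt_nonneg S)).1
    rwa [Matrix.IsHermitian, conjTranspose_eq_transpose_of_trivial] at this
  have hR2 : R * R = S := hR20
  have hRt : Rᵀ = R := hRt0
  obtain ⟨Q, hQt0, hQ20⟩ : ∃ Q : Matrix (Fin n) (Fin n) ℝ, Qᵀ = Q ∧ Q * Q = S⁻¹ := by
    open scoped MatrixOrder in
    refine ⟨CFC.sqrt S⁻¹, ?_, CFC.sqrt_mul_sqrt_self S⁻¹ (Matrix.nonneg_iff_posSemidef.mpr hSipsd)⟩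
    have := (Matrix.nonneg_iff_posSemidef.mp (CFC.sqrt_nonneg S⁻¹)).1
    rwa [Matrix.IsHermitian, conjTranspose_eq_transpose_of_trivial] at this
  have hQ2 : Q * Q = S⁻¹ := hQ20
  have hQt : Qᵀ = Q := hQt0
  have hQSQ : Q * S * Q = 1 := by
    have h1 : Q * (Q * S) = 1 := by rw [← mul_assoc, hQ2, hSS']
    have h2 : (Q * S) * Q = 1 := by rw [mul_eq_one_comm] at h1; exact h1
    rw [mul_assoc]; rw [mul_assoc] at h2; exact h2
  set D := A - S * Aᵀ * S⁻¹ with hDdef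
  set M := A * S - S * Aᵀ with hMdef
  have hDS : D * S = M := by
    rw [hDdef, hMdef, Matrix.sub_mul, mul_assoc, hSS', mul_one]
  -- step 1 : tr(D S Dᵀ) = tr(M S⁻¹ Mᵀ)
  have step1 : (D * S * Dᵀ).trace = (M * S⁻¹ * Mᵀ).trace := by
    have : M * S⁻¹ * Mᵀ = D * S * Dᵀ := by
      rw [← hDS, Matrix.transpose_mul, hSt]
      calc D * S * S⁻¹ * (S * Dᵀ) = D * (S * S⁻¹) * S * Dᵀ := by
            simp only [mul_assoc]
        _ = D * S * Dᵀ := by rw [hSS, mul_one]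
    rw [this]
  -- step 2 : c * tr(M S⁻¹ Mᵀ) ≤ tr(M Mᵀ)
  have step2 : c * (M * S⁻¹ * Mᵀ).trace ≤ (M * Mᵀ).trace := by
    have h := tr_conj_ge hlow' (M * Q)
    have e1 : M * Q * S * (M * Q)ᵀ = M * Mᵀ := by
      rw [Matrix.transpose_mul, hQt]
      calc M * Q * S * (Q * Mᵀ) = M * (Q * S * Q) * Mᵀ := by simp only [mul_assoc]
        _ = M * Mᵀ := by rw [hQSQ, mul_one]
    have e2 : M * Q * (M * Q)ᵀ = M * S⁻¹ * Mᵀ := by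
      rw [Matrix.transpose_mul, hQt]
      calc M * Q * (Q * Mᵀ) = M * (Q * Q) * Mᵀ := by simp only [mul_assoc]
        _ = M * S⁻¹ * Mᵀ := by rw [hQ2]
    rw [e1, e2] at h
    exact h
  -- step 3 : tr(M Mᵀ) ≤ 4 * tr(A S S Aᵀ)
  have step3 : (M * Mᵀ).trace ≤ 4 * (A * S * S * Aᵀ).trace := by
    set X := A * S with hX
    set Y := S * Aᵀ with hY
    have hid : X * Xᵀ + X * Xᵀ + (Y * Yᵀ + Y * Yᵀ) - M * Mᵀ = (X + Y) * (X + Y)ᵀ := by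
      rw [hMdef, Matrix.transpose_add, Matrix.transpose_sub]
      noncomm_ring
    have hpos := sq_trace_nonneg (X + Y)
    rw [← hid] at hpos
    have h1 : (X * Xᵀ).trace = (A * S * S * Aᵀ).trace := by
      rw [hX, Matrix.transpose_mul, hSt, mul_assoc, mul_assoc, mul_assoc]
    have h2 : (Y * Yᵀ).trace = (A * S * S * Aᵀ).trace := by
      rw [hY, Matrix.transpose_mul, hSt, transpose_transpose]
      calc (S * Aᵀ * (A * S)).trace = ((A * S) * (S * Aᵀ)).trace :=
            Matrix.trace_mul_comm _ _
        _ = (A * S * S * Aᵀ).trace := by rw [mul_assoc, mul_assoc, mul_assoc]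
    simp only [trace_sub, trace_add] at hpos
    rw [h1, h2] at hpos
    linarith
  -- step 4 : tr(A S S Aᵀ) ≤ C * tr(A S Aᵀ)
  have step4 : (A * S * S * Aᵀ).trace ≤ C * (A * S * Aᵀ).trace := by
    have h := tr_conj_le hhigh' (A * R)
    have e1 : A * R * S * (A * R)ᵀ = A * S * S * Aᵀ := by
      rw [Matrix.transpose_mul, hRt]
      have : R * S * R = S * S := by rw [← hR2]; noncomm_ring
      calc A * R * S * (R * Aᵀ) = A * (R * S * R) * Aᵀ := by simp only [mul_assoc]
        _ = A * (S * S) * Aᵀ := by rw [this]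
        _ = A * S * S * Aᵀ := by simp only [mul_assoc]
    have e2 : A * R * (A * R)ᵀ = A * S * Aᵀ := by
      rw [Matrix.transpose_mul, hRt]
      calc A * R * (R * Aᵀ) = A * (R * R) * Aᵀ := by simp only [mul_assoc]
        _ = A * S * Aᵀ := by rw [hR2]
    rw [e1, e2] at h
    exact h
  -- step 5 : tr(A S Aᵀ) ≤ C * tr(A Aᵀ)
  have step5 : (A * S * Aᵀ).trace ≤ C * (A * Aᵀ).trace := tr_conj_le hhigh' A
  -- combine
  rw [div_mul_eq_mul_div, le_div_iff₀ hc]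
  have htrD : (D * S * Dᵀ).trace = ((A - S * Aᵀ * S⁻¹) * S * (A - S * Aᵀ * S⁻¹)ᵀ).trace := rfl
  rw [← htrD]
  nlinarith [step1, step2, step3, step4, step5, mul_le_mul_of_nonneg_left step5 hC.le,
    mul_le_mul_of_nonneg_left step4 hC.le]
end
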